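/- arXiv:1706.07475 — 5 statements merged into one kernel-verified Lean document; each statement's English description precedes it below -/
import Mathlib

section
/- Let 𝒯 be a layering partition of a finite connected graph G and let Δ be the maximum diameter of its clusters. Then for all vertices u and v of G, d_𝒯(u,v) ≤ d_G(u,v) ≤ d_𝒯(u,v) + Δ. -/
open SimpleGraph

variable {V : Type}

/-- `u` and `v` belong to the same cluster of the layering partition of `G`
with start vertex `s`: they are in the same layer (same distance from `s`) and
are connected by a walk using only vertices in the same or upper layers. -/
def layerRel (G : SimpleGraph V) (s u v : V) : Prop :=
  G.dist s u = G.dist s v ∧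
    ∃ w : G.Walk u v, ∀ x ∈ w.support, G.dist s u ≤ G.dist s x

theorem layerRel_refl (G : SimpleGraph V) (s u : V) : layerRel G s u u :=
  ⟨rfl, SimpleGraph.Walk.nil, by simp⟩

theorem layerRel_symm (G : SimpleGraph V) (s : V) : ∀ {u v : V},
    layerRel G s u v → layerRel G s v u := by
  rintro u v ⟨h1, w, hw⟩
  exact ⟨h1.symm, w.reverse, fun x hx => h1 ▸ hw x (by simpa using hx)⟩

theorem layerRel_trans (G : SimpleGraph V) (s : V) : ∀ {u v w : V},
    layerRel G s u v → layerRel G s v w → layerRel G s u w := by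
  rintro u v w ⟨h1, p, hp⟩ ⟨h2, q, hq⟩
  refine ⟨h1.trans h2, p.append q, fun x hx => ?_⟩
  rcases (SimpleGraph.Walk.mem_support_append_iff p q).mp hx with h | h
  · exact hp x h
  · exact h1 ▸ hq x h

/-- The setoid on vertices whose classes are the clusters of the layering partition. -/
def layerSetoid (G : SimpleGraph V) (s : V) : Setoid V :=
  ⟨layerRel G s, ⟨layerRel_refl G s, layerRel_symm G s, layerRel_trans G s⟩⟩

/-- The clusters of the layering partition of `G` with start vertex `s`. -/
def Cluster (G : SimpleGraph V) (s : V) : Type _ := Quotient (layerSetoid G s)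

/-- The cluster containing a vertex. -/
def toCluster (G : SimpleGraph V) (s : V) (v : V) : Cluster G s :=
  Quotient.mk (layerSetoid G s) v

/-- The layering partition 𝒯 seen as a graph on the clusters: two (distinct) clusters are
adjacent iff `G` contains an edge with one endpoint in each.  (This graph is a tree.) -/
def clusterGraph (G : SimpleGraph V) (s : V) : SimpleGraph (Cluster G s) where
  Adj C C' := C ≠ C' ∧ ∃ u v : V, toCluster G s u = C ∧ toCluster G s v = C' ∧ G.Adj u v
  symm := by
    constructor
    rintro C C' ⟨hne, u, v, hu, hv, ha⟩
    exact ⟨hne.symm, v, u, hv, hu, ha.symm⟩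
  loopless := by
    constructor
    rintro C ⟨hne, -⟩
    exact hne rfl

/-- The tree distance `d_𝒯(u,v)` between the clusters containing `u` and `v`. -/
noncomputable def layerDist (G : SimpleGraph V) (s u v : V) : ℕ :=
  (clusterGraph G s).dist (toCluster G s u) (toCluster G s v)

/-- `Δ` is the maximum diameter in `G` of a cluster of the layering partition. -/
def IsMaxClusterDiam (G : SimpleGraph V) (s : V) (Δ : ℕ) : Prop :=
  IsGreatest {d : ℕ | ∃ u v : V, layerRel G s u v ∧ G.dist u v = d} Δ

/-- `D` is an `(r+φ)`-dominating set of `G`: every vertex `v` is within distance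
`r v + φ` of `D`. -/
def IsRPhiDomSet (G : SimpleGraph V) (r : V → ℕ) (φ : ℕ) (D : Set V) : Prop :=
  ∀ v : V, ∃ u ∈ D, G.dist v u ≤ r v + φ

/-- `S` induces a connected subgraph of `G`. -/
def IsConnSet (G : SimpleGraph V) (S : Set V) : Prop := (G.induce S).Connected

/-- `r(C)`, the minimum of `r` over the vertices of the cluster `C`. -/
noncomputable def clusterRadius (G : SimpleGraph V) (s : V) (r : V → ℕ)
    (C : Cluster G s) : ℕ :=
  sInf (r '' {v : V | toCluster G s v = C})

/-- A subtree of the layering partition 𝒯, i.e. a connected set of clusters. -/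
def IsSubtree (G : SimpleGraph V) (s : V) (T' : Set (Cluster G s)) : Prop :=
  ((clusterGraph G s).induce T').Connected

/-- `T'` is an `(r+δ)`-dominating subtree of 𝒯: a subtree such that every cluster `C`
of 𝒯 is within tree-distance `r(C) + δ` of some cluster of `T'`. -/
def IsDomSubtree (G : SimpleGraph V) (s : V) (r : V → ℕ) (δ : ℕ)
    (T' : Set (Cluster G s)) : Prop :=
  IsSubtree G s T' ∧
    ∀ C : Cluster G s, ∃ C' ∈ T',
      (clusterGraph G s).dist C C' ≤ clusterRadius G s r C + δ

/-- `T'` is a minimum `(r+δ)`-dominating subtree of 𝒯 (fewest clusters). -/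
def IsMinDomSubtree (G : SimpleGraph V) (s : V) (r : V → ℕ) (δ : ℕ)
    (T' : Set (Cluster G s)) : Prop :=
  IsDomSubtree G s r δ T' ∧
    ∀ T'' : Set (Cluster G s), IsDomSubtree G s r δ T'' → T'.ncard ≤ T''.ncard

/-- The degree of a cluster `C` inside a set `T'` of clusters. -/
noncomputable def clusterDegree (G : SimpleGraph V) (s : V)
    (T' : Set (Cluster G s)) (C : Cluster G s) : ℕ :=
  {C' : Cluster G s | C' ∈ T' ∧ (clusterGraph G s).Adj C C'}.ncard

/-- `R` is the root of the subtree `T'` of 𝒯 (with the rooting inherited from 𝒯,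
whose root is the cluster `{s}`): the cluster of `T'` closest to the root of 𝒯. -/
def IsRootOf (G : SimpleGraph V) (s : V) (T' : Set (Cluster G s))
    (R : Cluster G s) : Prop :=
  R ∈ T' ∧ ∀ C ∈ T',
    (clusterGraph G s).dist (toCluster G s s) R ≤
      (clusterGraph G s).dist (toCluster G s s) C

/-- `Λ(T')`: the number of leaves of the subtree `T'` rooted at `R`
(`0` if `T'` is a single node). -/
noncomputable def numLeaves (G : SimpleGraph V) (s : V) (T' : Set (Cluster G s))
    (R : Cluster G s) : ℕ :=
  {C : Cluster G s | C ∈ T' ∧ C ≠ R ∧ clusterDegree G s T' C = 1}.ncard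

/-- The eccentricity of a set `S` in `G`: `max_v min_{u ∈ S} d_G(v,u)`. -/
noncomputable def eccSet (G : SimpleGraph V) (S : Set V) : ℕ :=
  sSup (Set.range fun v : V => sInf ((G.dist v) '' S))


section AuxLayering

variable {G : SimpleGraph V} {s : V}

/-- `x` is an "ancestor" of `u` at layer `i`: it lies at layer `i`, within
distance `dist s u - i` of `u`, and is connected to `u` within layers `≥ i`. -/
def Anc (G : SimpleGraph V) (s : V) (i : ℕ) (x u : V) : Prop :=
  G.dist s x = i ∧ G.dist x u + i ≤ G.dist s u ∧
    ∃ w : G.Walk x u, ∀ y ∈ w.support, i ≤ G.dist s y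

lemma adj_layer_le (hconn : G.Connected) {a b : V} (h : G.Adj a b) :
    G.dist s b ≤ G.dist s a + 1 := by
  have h1 : G.dist a b ≤ 1 := by simpa using SimpleGraph.dist_le h.toWalk
  have := hconn.dist_triangle (u := s) (v := a) (w := b)
  omega

lemma exists_pred (hconn : G.Connected) {u : V} {n : ℕ} (h : G.dist s u = n + 1) :
    ∃ a, G.Adj a u ∧ G.dist s a = n := by
  obtain ⟨p, hp⟩ := (hconn s u).exists_walk_length_eq_dist
  have hlen : p.reverse.length = n + 1 := by rw [Walk.length_reverse, hp, h]
  cases hq : p.reverse with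
  | nil => rw [hq] at hlen; simp at hlen
  | cons hadj q =>
    rename_i b
    rw [hq] at hlen
    simp only [Walk.length_cons] at hlen
    have h1 : G.dist s b ≤ q.length := by
      have := SimpleGraph.dist_le q.reverse
      rwa [Walk.length_reverse] at this
    have h2 : G.dist s u ≤ G.dist s b + 1 := adj_layer_le hconn hadj.symm
    exact ⟨b, hadj.symm, by omega⟩

lemma exists_anc (hconn : G.Connected) :
    ∀ (n : ℕ) (u : V) (i : ℕ), G.dist s u = i + n → ∃ x, Anc G s i x u := by
  intro n
  induction n with
  | zero =>
    intro u i h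
    refine ⟨u, by omega, by rw [SimpleGraph.dist_self]; omega, Walk.nil, ?_⟩
    intro y hy
    simp at hy
    subst hy
    omega
  | succ n ih =>
    intro u i h
    obtain ⟨a, hadj, hda⟩ := exists_pred hconn (show G.dist s u = (i + n) + 1 by omega)
    obtain ⟨x, hx1, hx2, w, hw⟩ := ih a i (by omega)
    refine ⟨x, hx1, ?_, w.concat hadj, ?_⟩
    · have h1 : G.dist a u ≤ 1 := by simpa using SimpleGraph.dist_le hadj.toWalk
      have h2 := hconn.dist_triangle (u := x) (v := a) (w := u)
      omega
    · intro y hy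
      rw [Walk.support_concat, List.mem_append] at hy
      rcases hy with hy | hy
      · exact hw y hy
      · simp at hy; subst hy; omega

lemma anc_comp (hconn : G.Connected) {i j : ℕ} {x y u : V} (hxy : Anc G s i x y)
    (hyu : Anc G s j y u) (hij : i ≤ j) : Anc G s i x u := by
  obtain ⟨h1, h2, w1, hw1⟩ := hxy
  obtain ⟨h3, h4, w2, hw2⟩ := hyu
  refine ⟨h1, ?_, w1.append w2, ?_⟩
  · have := hconn.dist_triangle (u := x) (v := y) (w := u)
    omega
  · intro z hz
    rcases (Walk.mem_support_append_iff w1 w2).mp hz with hz | hz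
    · exact hw1 z hz
    · exact le_trans hij (hw2 z hz)

lemma anc_rel {i : ℕ} {u v x y : V} (hx : Anc G s i x u) (hy : Anc G s i y v)
    (w : G.Walk u v) (hw : ∀ z ∈ w.support, i ≤ G.dist s z) : layerRel G s x y := by
  obtain ⟨h1, _, w1, hw1⟩ := hx
  obtain ⟨h2, _, w2, hw2⟩ := hy
  refine ⟨h1.trans h2.symm, (w1.append w).append w2.reverse, ?_⟩
  intro z hz
  rw [h1]
  rcases (Walk.mem_support_append_iff _ _).mp hz with hz | hz
  · rcases (Walk.mem_support_append_iff _ _).mp hz with hz | hz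
    · exact hw1 z hz
    · exact hw z hz
  · rw [Walk.support_reverse, List.mem_reverse] at hz
    exact hw2 z hz

lemma toCluster_eq_rel {u v : V} (h : toCluster G s u = toCluster G s v) :
    layerRel G s u v := Quotient.exact h

lemma main_aux (hconn : G.Connected) :
    ∀ {C C' : Cluster G s} (W : (clusterGraph G s).Walk C C') (u v : V),
    toCluster G s u = C → toCluster G s v = C' →
    ∃ i x y, Anc G s i x u ∧ Anc G s i y v ∧ layerRel G s x y ∧
      G.dist s u + G.dist s v ≤ W.length + i + i := by
  intro C C' W
  induction W with
  | nil =>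
    intro u v hu hv
    have hrel : layerRel G s u v := toCluster_eq_rel (hu.trans hv.symm)
    have h0 : G.dist s u = G.dist s v := hrel.1
    refine ⟨G.dist s u, u, v, ⟨rfl, ?_, Walk.nil, ?_⟩, ⟨h0.symm, ?_, Walk.nil, ?_⟩,
      hrel, ?_⟩
    · rw [SimpleGraph.dist_self]; omega
    · intro y hy; simp at hy; subst hy; omega
    · rw [SimpleGraph.dist_self]; omega
    · intro y hy; simp at hy; subst hy; omega
    · simp only [Walk.length_nil]; omega
  | @cons C C₁ C' hadj W ih =>
    intro u v hu hv
    obtain ⟨hne, a, b, ha, hb, hab⟩ :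
        C ≠ C₁ ∧ ∃ a b : V, toCluster G s a = C ∧ toCluster G s b = C₁ ∧ G.Adj a b := hadj
    obtain ⟨i₁, x₁, y, hx₁, hy, hrel, hcount⟩ := ih b v hb hv
    have hua : layerRel G s u a := toCluster_eq_rel (hu.trans ha.symm)
    have hdx₁ : G.dist s x₁ = i₁ := hx₁.1
    have hdy : G.dist s y = i₁ := hy.1
    have hi₁b : i₁ ≤ G.dist s b := by have := hx₁.2.1; omega
    set i := min i₁ (G.dist s u) with hi
    have hii₁ : i ≤ i₁ := min_le_left _ _
    have hiu : i ≤ G.dist s u := min_le_right _ _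
    obtain ⟨x, hx⟩ := exists_anc (s := s) hconn (G.dist s u - i) u i (by omega)
    obtain ⟨z, hz⟩ := exists_anc (s := s) hconn (i₁ - i) x₁ i (by omega)
    obtain ⟨z', hz'⟩ := exists_anc (s := s) hconn (i₁ - i) y i (by omega)
    have hzb : Anc G s i z b := anc_comp hconn hz hx₁ hii₁
    have hz'v : Anc G s i z' v := anc_comp hconn hz' hy hii₁
    -- layerRel z z' from layerRel x₁ y
    obtain ⟨hr1, wr, hwr⟩ := hrel
    have h1 : layerRel G s z z' := anc_rel hz hz' wr (fun t ht => le_trans hii₁ (by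
      have := hwr t ht; omega))
    -- layerRel x z from walk u → a → b
    obtain ⟨hu1, wu, hwu⟩ := hua
    have hdab : G.dist s b ≤ G.dist s a + 1 := adj_layer_le hconn hab
    have hdba : G.dist s a ≤ G.dist s b + 1 := adj_layer_le hconn hab.symm
    have h2 : layerRel G s x z := by
      refine anc_rel hx hzb (wu.append hab.toWalk) ?_
      intro t ht
      rcases (Walk.mem_support_append_iff _ _).mp ht with ht | ht
      · exact le_trans hiu (hwu t ht)
      · have : t = a ∨ t = b := by simpa [SimpleGraph.Adj.toWalk] using ht
        rcases this with rfl | rfl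
        · omega
        · omega
    refine ⟨i, x, z', hx, hz'v, layerRel_trans G s h2 h1, ?_⟩
    show _ ≤ W.length + 1 + i + i
    omega

/-- Projection of a walk in `G` to a walk in the cluster graph. -/
lemma cluster_walk_le : ∀ {u v : V} (w : G.Walk u v),
    ∃ W : (clusterGraph G s).Walk (toCluster G s u) (toCluster G s v),
      W.length ≤ w.length := by
  intro u v w
  induction w with
  | nil => exact ⟨Walk.nil, le_refl _⟩
  | cons h p ih =>
    rename_i a b c
    obtain ⟨W, hW⟩ := ih
    by_cases hc : toCluster G s a = toCluster G s b
    · rw [Walk.length_cons, hc]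
      exact ⟨W, by omega⟩
    · have hadj : (clusterGraph G s).Adj (toCluster G s a) (toCluster G s b) :=
        ⟨hc, a, b, rfl, rfl, h⟩
      exact ⟨Walk.cons hadj W, by simp only [Walk.length_cons]; omega⟩

end AuxLayering

/-- For a layering partition of a finite connected graph `G` with
maximum cluster diameter `Δ`: for all vertices `u, v`,
`d_𝒯(u,v) ≤ d_G(u,v) ≤ d_𝒯(u,v) + Δ`. -/
theorem layering_partition_dist_bounds
    {V : Type} [Fintype V] (G : SimpleGraph V) (hconn : G.Connected)
    (s : V) (Δ : ℕ) (hΔ : IsMaxClusterDiam G s Δ) :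
    ∀ u v : V, layerDist G s u v ≤ G.dist u v ∧
      G.dist u v ≤ layerDist G s u v + Δ := by
  intro u v
  constructor
  · obtain ⟨p, hp⟩ := (hconn u v).exists_walk_length_eq_dist
    obtain ⟨W, hW⟩ := cluster_walk_le (s := s) p
    exact le_trans (SimpleGraph.dist_le W) (hp ▸ hW)
  · have hreach : (clusterGraph G s).Reachable (toCluster G s u) (toCluster G s v) := by
      obtain ⟨p⟩ := hconn u v
      obtain ⟨W, _⟩ := cluster_walk_le (s := s) p
      exact ⟨W⟩
    obtain ⟨W, hW⟩ := hreach.exists_walk_length_eq_dist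
    obtain ⟨i, x, y, hx, hy, hrel, hcount⟩ := main_aux hconn W u v rfl rfl
    have hxy : G.dist x y ≤ Δ := hΔ.2 ⟨x, y, hrel, rfl⟩
    have t1 := hconn.dist_triangle (u := u) (v := x) (w := v)
    have t2 := hconn.dist_triangle (u := x) (v := y) (w := v)
    have c1 : G.dist u x = G.dist x u := SimpleGraph.dist_comm ..
    have c2 : G.dist y v = G.dist v y := SimpleGraph.dist_comm ..
    have hxu := hx.2.1
    have hyv := hy.2.1
    have hld : layerDist G s u v = W.length := hW.symm
    omega
end

section
/- Let 𝒯 be a layering partition of a finite connected graph G, r : V → ℕ, and let T_r be a minimum r-dominating subtree of 𝒯. If T_r contains more than one cluster, then every connected r-dominating set of G intersects every cluster of T_r. Consequently, T_r has at most |D_r| clusters, where D_r is a minimum connected r-dominating set of G. -/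
open SimpleGraph

variable {V : Type}

set_option linter.unusedSectionVars false
set_option linter.unusedVariables false

section TreeAux

variable {W : Type} [DecidableEq W] {H : SimpleGraph W}

omit [DecidableEq W] in
lemma aux_isPath_append {u v w : W} {p : H.Walk u v} {q : H.Walk v w}
    (hp : p.IsPath) (hq : q.IsPath)
    (hint : ∀ z, z ∈ p.support → z ∈ q.support → z = v) :
    (p.append q).IsPath := by
  apply Walk.IsPath.mk'
  rw [Walk.support_append]
  have htail : q.support = v :: q.support.tail := q.support_eq_cons
  have hq2 : q.support.tail.Nodup := by
    have := hq.support_nodup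
    rw [htail] at this
    exact this.of_cons
  have hvq : v ∉ q.support.tail := by
    have := hq.support_nodup
    rw [htail] at this
    exact (List.nodup_cons.mp this).1
  refine hp.support_nodup.append hq2 ?_
  intro z hz1 hz2
  have := hint z hz1 (List.mem_of_mem_tail hz2)
  subst this
  exact hvq hz2

noncomputable def tpath (hc : H.Connected) (u v : W) : H.Walk u v :=
  ((hc.preconnected u v).some).bypass

lemma tpath_isPath (hc : H.Connected) (u v : W) : (tpath hc u v).IsPath :=
  Walk.bypass_isPath _

lemma eq_tpath (ha : H.IsAcyclic) (hc : H.Connected) {u v : W}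
    (p : H.Walk u v) (hp : p.IsPath) : p = tpath hc u v := by
  have := (isAcyclic_iff_path_unique.mp ha)
    (⟨p, hp⟩ : H.Path u v) ⟨tpath hc u v, tpath_isPath hc u v⟩
  exact congrArg Subtype.val this

lemma tpath_length (ha : H.IsAcyclic) (hc : H.Connected) (u v : W) :
    (tpath hc u v).length = H.dist u v := by
  obtain ⟨p, hp⟩ := (hc.preconnected u v).exists_walk_length_eq_dist
  have h1 : p.bypass = tpath hc u v := eq_tpath ha hc _ p.bypass_isPath
  have h2 := Walk.length_bypass_le p
  have h3 := SimpleGraph.dist_le (tpath hc u v)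
  rw [h1] at h2
  omega

lemma tpath_takeUntil_eq (ha : H.IsAcyclic) (hc : H.Connected)
    {u v m : W} (hm : m ∈ (tpath hc u v).support) :
    (tpath hc u v).takeUntil m hm = tpath hc u m :=
  eq_tpath ha hc _ ((tpath_isPath hc u v).takeUntil hm)

lemma tpath_dropUntil_eq (ha : H.IsAcyclic) (hc : H.Connected)
    {u v m : W} (hm : m ∈ (tpath hc u v).support) :
    (tpath hc u v).dropUntil m hm = tpath hc m v :=
  eq_tpath ha hc _ ((tpath_isPath hc u v).dropUntil hm)

lemma dist_split (ha : H.IsAcyclic) (hc : H.Connected) {u v m : W}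
    (hm : m ∈ (tpath hc u v).support) :
    H.dist u v = H.dist u m + H.dist m v := by
  have hs := Walk.take_spec (tpath hc u v) hm
  have hlen := congrArg Walk.length hs
  rw [Walk.length_append, tpath_takeUntil_eq ha hc hm, tpath_dropUntil_eq ha hc hm,
    tpath_length ha hc, tpath_length ha hc, tpath_length ha hc] at hlen
  omega

lemma mem_tpath_of_dist_le (ha : H.IsAcyclic) (hc : H.Connected) {u v a m : W}
    (haa : a ∈ (tpath hc u v).support) (hm : m ∈ (tpath hc u v).support)
    (hle : H.dist u m ≤ H.dist u a) : a ∈ (tpath hc m v).support := by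
  have hs := Walk.take_spec (tpath hc u v) hm
  rw [← hs, Walk.mem_support_append_iff] at haa
  rcases haa with h | h
  · rw [tpath_takeUntil_eq ha hc hm] at h
    have h1 := dist_split ha hc h
    have h2 : H.dist a m = 0 := by omega
    have h3 : a = m := (hc.dist_eq_zero_iff).mp h2
    exact h3 ▸ Walk.start_mem_support _
  · rwa [tpath_dropUntil_eq ha hc hm] at h

omit [DecidableEq W] in
lemma walk_induce_to_walk {S : Set W} {a b : S} (w : (H.induce S).Walk a b) :
    ∃ p : H.Walk a.1 b.1, ∀ x ∈ p.support, x ∈ S := by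
  induction w with
  | nil =>
    refine ⟨Walk.nil, ?_⟩
    intro x hx
    rw [Walk.support_nil, List.mem_singleton] at hx
    subst hx
    exact Subtype.coe_prop _
  | @cons a' b' c' h w ih =>
    obtain ⟨p, hp⟩ := ih
    have h' : H.Adj a'.1 b'.1 := h
    refine ⟨Walk.cons h' p, ?_⟩
    intro x hx
    rw [Walk.support_cons] at hx
    rcases List.mem_cons.mp hx with rfl | hx
    · exact Subtype.coe_prop _
    · exact hp x hx

omit [DecidableEq W] in
lemma walks_of_induce_connected {S : Set W} (hS : (H.induce S).Connected)
    {u v : W} (hu : u ∈ S) (hv : v ∈ S) :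
    ∃ w : H.Walk u v, ∀ x ∈ w.support, x ∈ S := by
  obtain ⟨w⟩ := hS.preconnected ⟨u, hu⟩ ⟨v, hv⟩
  exact walk_induce_to_walk w

omit [DecidableEq W] in
lemma reachable_induce_of_walk {S : Set W} :
    ∀ {u v : W} (w : H.Walk u v), (∀ x ∈ w.support, x ∈ S) →
      ∀ (hu : u ∈ S) (hv : v ∈ S), (H.induce S).Reachable ⟨u, hu⟩ ⟨v, hv⟩ := by
  intro u v w
  induction w with
  | nil => exact fun _ hu hv => Reachable.refl _
  | @cons a' b' c' h w ih =>
    intro hsupp hu hv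
    have hb : b' ∈ S := hsupp b' (by rw [Walk.support_cons]; exact List.mem_cons_of_mem _ w.start_mem_support)
    have h1 : (H.induce S).Adj ⟨a', hu⟩ ⟨b', hb⟩ := h
    exact (h1.reachable).trans (ih (fun x hx => hsupp x (by rw [Walk.support_cons]; exact List.mem_cons_of_mem _ hx)) hb hv)

omit [DecidableEq W] in
lemma induce_connected_of_walks {S : Set W} (hne : S.Nonempty)
    (h : ∀ u ∈ S, ∀ v ∈ S, ∃ w : H.Walk u v, ∀ x ∈ w.support, x ∈ S) :
    (H.induce S).Connected := by
  rw [connected_iff]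
  constructor
  · rintro ⟨u, hu⟩ ⟨v, hv⟩
    obtain ⟨w, hw⟩ := h u hu v hv
    exact reachable_induce_of_walk w hw hu hv
  · exact ⟨⟨hne.some, hne.some_mem⟩⟩

lemma tpath_support_subset (ha : H.IsAcyclic) (hc : H.Connected) {S : Set W} {u v : W}
    (w : H.Walk u v) (hw : ∀ x ∈ w.support, x ∈ S) :
    ∀ x ∈ (tpath hc u v).support, x ∈ S := by
  intro x hx
  have heq : w.bypass = tpath hc u v := eq_tpath ha hc _ w.bypass_isPath
  exact hw x (Walk.support_bypass_subset w (heq ▸ hx))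

lemma median (ha : H.IsAcyclic) (hc : H.Connected) (a b c : W) :
    ∃ m : W, m ∈ (tpath hc a b).support ∧ m ∈ (tpath hc a c).support ∧
      m ∈ (tpath hc b c).support := by
  classical
  set P1 := tpath hc a b with hP1
  set P2 := tpath hc a c with hP2
  set F : Set W := {x | x ∈ P1.support ∧ x ∈ P2.support} with hF
  have hfin : F.Finite := (P1.support.finite_toSet).subset (fun x hx => hx.1)
  have hne : F.Nonempty := ⟨a, P1.start_mem_support, P2.start_mem_support⟩
  have hNbdd : BddAbove ((H.dist a) '' F) := (hfin.image _).bddAbove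
  obtain ⟨m, hmF, hmval⟩ := Nat.sSup_mem (hne.image (H.dist a)) hNbdd
  have hub : ∀ x ∈ F, H.dist a x ≤ H.dist a m := by
    intro x hx
    rw [hmval]
    exact le_csSup hNbdd ⟨x, hx, rfl⟩
  have hkey : ∀ z, z ∈ (tpath hc m b).support → z ∈ (tpath hc m c).support → z = m := by
    intro x hx1 hx2
    by_contra hxm
    have hx1' : x ∈ P1.support := by
      have hd := tpath_dropUntil_eq ha hc hmF.1
      exact Walk.support_dropUntil_subset _ hmF.1 (hd ▸ hx1)
    have hx2' : x ∈ P2.support := by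
      have hd := tpath_dropUntil_eq ha hc hmF.2
      exact Walk.support_dropUntil_subset _ hmF.2 (hd ▸ hx2)
    have e1 : H.dist a b = H.dist a m + H.dist m b := dist_split ha hc hmF.1
    have e2 : H.dist m b = H.dist m x + H.dist x b := dist_split ha hc hx1
    have e3 : H.dist a b = H.dist a x + H.dist x b := dist_split ha hc hx1'
    have e4 : H.dist a x ≤ H.dist a m := hub x ⟨hx1', hx2'⟩
    have e5 : H.dist m x = 0 := by omega
    exact hxm ((hc.dist_eq_zero_iff).mp e5).symm
  have hw : ((tpath hc m b).reverse.append (tpath hc m c)).IsPath := by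
    apply aux_isPath_append ((tpath_isPath hc m b).reverse) (tpath_isPath hc m c)
    intro z hz1 hz2
    exact hkey z (by rwa [Walk.support_reverse, List.mem_reverse] at hz1) hz2
  have heq := eq_tpath ha hc _ hw
  refine ⟨m, hmF.1, hmF.2, ?_⟩
  rw [← heq, Walk.mem_support_append_iff]
  left
  rw [Walk.support_reverse, List.mem_reverse]
  exact Walk.start_mem_support _

end TreeAux

section ClusterAux

variable {G : SimpleGraph V} {s : V}

noncomputable def cLayer (G : SimpleGraph V) (s : V) : Cluster G s → ℕ :=
  Quotient.lift (G.dist s) (fun _ _ h => h.1)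

@[simp] lemma cLayer_toCluster (G : SimpleGraph V) (s v : V) :
    cLayer G s (toCluster G s v) = G.dist s v := rfl

lemma cluster_exists_rep (C : Cluster G s) : ∃ v : V, toCluster G s v = C :=
  Quot.exists_rep C

lemma layer_step (hconn : G.Connected) {u v : V} (h : G.Adj u v)
    (hne : toCluster G s u ≠ toCluster G s v) :
    G.dist s v = G.dist s u + 1 ∨ G.dist s u = G.dist s v + 1 := by
  have h1 : G.dist u v ≤ 1 := by
    have := SimpleGraph.dist_le (Walk.cons h Walk.nil)
    simpa using this
  have h1' : G.dist v u ≤ 1 := by rwa [SimpleGraph.dist_comm] at h1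
  have h2 : G.dist s v ≤ G.dist s u + 1 :=
    le_trans (hconn.dist_triangle (v := u)) (by omega)
  have h3 : G.dist s u ≤ G.dist s v + 1 :=
    le_trans (hconn.dist_triangle (v := v)) (by omega)
  have h4 : G.dist s u ≠ G.dist s v := by
    intro heq
    apply hne
    apply Quotient.sound
    refine ⟨heq, Walk.cons h Walk.nil, ?_⟩
    intro x hx
    rw [Walk.support_cons, Walk.support_nil] at hx
    rcases List.mem_cons.mp hx with rfl | hx
    · exact le_refl _
    · rw [List.mem_singleton] at hx
      subst hx
      omega
  omega

lemma cluster_layer_step (hconn : G.Connected) {C C' : Cluster G s}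
    (h : (clusterGraph G s).Adj C C') :
    cLayer G s C' = cLayer G s C + 1 ∨ cLayer G s C = cLayer G s C' + 1 := by
  obtain ⟨hne, u, v, rfl, rfl, huv⟩ := h
  exact layer_step hconn huv hne

lemma unique_parent (hconn : G.Connected) {C B1 B2 : Cluster G s}
    (h1 : (clusterGraph G s).Adj C B1) (h2 : (clusterGraph G s).Adj C B2)
    (hl1 : cLayer G s B1 + 1 = cLayer G s C) (hl2 : cLayer G s B2 + 1 = cLayer G s C) :
    B1 = B2 := by
  obtain ⟨-, u1, v1, hu1, hv1, ha1⟩ := h1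
  obtain ⟨-, u2, v2, hu2, hv2, ha2⟩ := h2
  have hrel : layerRel G s u1 u2 := Quotient.exact (hu1.trans hu2.symm)
  obtain ⟨hd, w, hw⟩ := hrel
  subst hv1
  subst hv2
  subst hu1
  rw [cLayer_toCluster, cLayer_toCluster] at hl1 hl2
  apply Quotient.sound
  refine ⟨by omega, Walk.cons ha1.symm (w.concat ha2), ?_⟩
  intro x hx
  rw [Walk.support_cons] at hx
  rcases List.mem_cons.mp hx with rfl | hx
  · exact le_refl _
  · rw [Walk.support_concat, List.mem_append] at hx
    rcases hx with hx | hx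
    · have := hw x hx
      omega
    · rw [List.mem_singleton] at hx
      subst hx
      omega

lemma exists_cluster_walk {u v : V} (w : G.Walk u v) :
    ∃ p : (clusterGraph G s).Walk (toCluster G s u) (toCluster G s v),
      p.length ≤ w.length ∧ ∀ X ∈ p.support, ∃ x ∈ w.support, toCluster G s x = X := by
  induction w with
  | nil =>
    refine ⟨Walk.nil, le_refl _, ?_⟩
    intro X hX
    rw [Walk.support_nil, List.mem_singleton] at hX
    exact ⟨_, Walk.start_mem_support _, hX.symm⟩
  | @cons a b c h w ih =>
    obtain ⟨p, hlen, hsupp⟩ := ih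
    by_cases hq : toCluster G s a = toCluster G s b
    · refine ⟨p.copy hq.symm rfl, ?_, ?_⟩
      · rw [Walk.length_copy, Walk.length_cons]
        omega
      · intro X hX
        rw [Walk.support_copy] at hX
        obtain ⟨x, hx, hxX⟩ := hsupp X hX
        exact ⟨x, by rw [Walk.support_cons]; exact List.mem_cons_of_mem _ hx, hxX⟩
    · have hadj : (clusterGraph G s).Adj (toCluster G s a) (toCluster G s b) := ⟨hq, a, b, rfl, rfl, h⟩
      refine ⟨Walk.cons hadj p, ?_, ?_⟩
      · rw [Walk.length_cons, Walk.length_cons]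
        omega
      · intro X hX
        rw [Walk.support_cons] at hX
        rcases List.mem_cons.mp hX with rfl | hX
        · exact ⟨a, Walk.start_mem_support _, rfl⟩
        · obtain ⟨x, hx, hxX⟩ := hsupp X hX
          exact ⟨x, List.mem_cons_of_mem _ hx, hxX⟩

lemma clusterGraph_connected (hconn : G.Connected) : (clusterGraph G s).Connected := by
  rw [connected_iff]
  refine ⟨?_, ⟨toCluster G s s⟩⟩
  intro C C'
  obtain ⟨u, rfl⟩ := cluster_exists_rep C
  obtain ⟨v, rfl⟩ := cluster_exists_rep C'
  obtain ⟨p, -, -⟩ := exists_cluster_walk (s := s) ((hconn.preconnected u v).some)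
  exact ⟨p⟩

lemma clusterDist_le (hconn : G.Connected) (u v : V) :
    (clusterGraph G s).dist (toCluster G s u) (toCluster G s v) ≤ G.dist u v := by
  obtain ⟨w, hw⟩ := (hconn.preconnected u v).exists_walk_length_eq_dist
  obtain ⟨p, hlen, -⟩ := exists_cluster_walk (s := s) w
  exact le_trans (SimpleGraph.dist_le p) (hw ▸ hlen)

lemma no_cycle_at_max (hconn : G.Connected) {M : Cluster G s}
    (c : (clusterGraph G s).Walk M M) (hc : c.IsCycle)
    (hmax : ∀ x ∈ c.support, cLayer G s x ≤ cLayer G s M) : False := by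
  cases c with
  | nil => exact hc.ne_nil rfl
  | @cons _ b _ h p =>
    have hp : p.IsPath := ((Walk.cons_isCycle_iff _ _).mp hc).1
    have hlen : 2 ≤ p.length := by
      have := hc.three_le_length
      rw [Walk.length_cons] at this
      omega
    have hbM : cLayer G s b ≤ cLayer G s M := by
      apply hmax
      rw [Walk.support_cons]
      exact List.mem_cons_of_mem _ p.start_mem_support
    have hMb : cLayer G s M = cLayer G s b + 1 := by
      rcases cluster_layer_step hconn h with h' | h'
      · omega
      · exact h'
    cases p with
    | nil => exact h.ne rfl
    | @cons _ b2 _ h2 p2 =>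
      obtain ⟨y, q, h3, hdecomp⟩ := Walk.exists_cons_eq_concat h2 p2
      have hyp : y ∈ (Walk.cons h2 p2).support := by
        rw [hdecomp, Walk.support_concat, List.mem_append]
        exact Or.inl q.end_mem_support
      have hyM : cLayer G s y ≤ cLayer G s M := by
        apply hmax
        rw [Walk.support_cons]
        exact List.mem_cons_of_mem _ hyp
      have hMy : cLayer G s M = cLayer G s y + 1 := by
        rcases cluster_layer_step hconn h3.symm with h' | h'
        · omega
        · exact h'
      have hby : b ≠ y := by
        intro heq
        subst heq
        have hq : q.IsPath := by
          rw [hdecomp, Walk.concat_eq_append] at hp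
          exact hp.of_append_left
        have : q = Walk.nil := Walk.isPath_iff_eq_nil.mp hq
        subst this
        have := congrArg Walk.length hdecomp
        rw [Walk.length_cons, Walk.length_concat, Walk.length_nil] at this
        rw [Walk.length_cons] at hlen
        omega
      exact hby (unique_parent hconn h h3.symm (by omega) (by omega))

lemma clusterGraph_acyclic (hconn : G.Connected) : (clusterGraph G s).IsAcyclic := by
  intro M0 c0 hc0
  classical
  have hfin : {x | x ∈ c0.support}.Finite := c0.support.finite_toSet
  have hne : {x | x ∈ c0.support}.Nonempty := ⟨M0, c0.start_mem_support⟩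
  have hbdd : BddAbove ((cLayer G s) '' {x | x ∈ c0.support}) := (hfin.image _).bddAbove
  obtain ⟨M, hMsup, hMval⟩ := Nat.sSup_mem (hne.image (cLayer G s)) hbdd
  have hmax : ∀ x ∈ c0.support, cLayer G s x ≤ cLayer G s M := by
    intro x hx
    rw [hMval]
    exact le_csSup hbdd ⟨x, hx, rfl⟩
  apply no_cycle_at_max hconn (c0.rotate M hMsup) (hc0.rotate hMsup)
  intro x hx
  rw [Walk.support_eq_cons] at hx
  rcases List.mem_cons.mp hx with rfl | hx
  · exact le_refl _
  · have hx' : x ∈ c0.support.tail := (Walk.support_rotate c0 M hMsup).mem_iff.mp hx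
    exact hmax x (List.mem_of_mem_tail hx')

lemma isSubtree_singleton (G : SimpleGraph V) (s : V) (C : Cluster G s) :
    IsSubtree G s {C} := by
  show ((clusterGraph G s).induce {C}).Connected
  rw [connected_iff]
  refine ⟨?_, ⟨⟨C, rfl⟩⟩⟩
  rintro ⟨x, hx⟩ ⟨y, hy⟩
  have hx' : x = C := hx
  have hy' : y = C := hy
  have hxy : (⟨x, hx⟩ : ({C} : Set (Cluster G s))) = ⟨y, hy⟩ :=
    Subtype.ext (hx'.trans hy'.symm)
  exact hxy ▸ Reachable.refl _

lemma image_isDomSubtree (hconn : G.Connected) (r : V → ℕ) {D : Set V}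
    (hD : IsConnSet G D) (hdom : IsRPhiDomSet G r 0 D) :
    IsDomSubtree G s r 0 (toCluster G s '' D) := by
  have hDne : D.Nonempty := by
    obtain ⟨⟨x, hx⟩⟩ := hD.nonempty
    exact ⟨x, hx⟩
  constructor
  · show ((clusterGraph G s).induce (toCluster G s '' D)).Connected
    apply induce_connected_of_walks (hDne.image _)
    rintro X ⟨u, hu, rfl⟩ Y ⟨v, hv, rfl⟩
    obtain ⟨w, hw⟩ := walks_of_induce_connected hD hu hv
    refine ⟨(exists_cluster_walk (s := s) w).choose, ?_⟩
    intro X hX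
    obtain ⟨x, hx, hxX⟩ := (exists_cluster_walk (s := s) w).choose_spec.2 X hX
    exact ⟨x, hw x hx, hxX⟩
  · intro C
    have hCne : (r '' {v : V | toCluster G s v = C}).Nonempty := by
      obtain ⟨v, hv⟩ := cluster_exists_rep C
      exact ⟨r v, v, hv, rfl⟩
    obtain ⟨v, hv, hrv⟩ := Nat.sInf_mem hCne
    obtain ⟨u, hu, hdu⟩ := hdom v
    refine ⟨toCluster G s u, ⟨u, hu, rfl⟩, ?_⟩
    have h1 : (clusterGraph G s).dist C (toCluster G s u) ≤ G.dist v u := by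
      rw [← hv]
      exact clusterDist_le hconn v u
    have h2 : clusterRadius G s r C = r v := hrv.symm
    omega

end ClusterAux

/-- If `T_r` is a minimum `r`-dominating subtree of the layering
partition 𝒯 of `G` with more than one cluster, then every connected `r`-dominating
set of `G` intersects every cluster of `T_r`; consequently `|T_r| ≤ |D_r|` for every
minimum connected `r`-dominating set `D_r`. -/
theorem minDomSubtree_card_le_connected_dom
    {V : Type} [Fintype V] (G : SimpleGraph V) (hconn : G.Connected)
    (s : V) (r : V → ℕ) (Tr : Set (Cluster G s))
    (hTr : IsMinDomSubtree G s r 0 Tr) :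
    (1 < Tr.ncard →
      ∀ D : Set V, IsConnSet G D → IsRPhiDomSet G r 0 D →
        ∀ C ∈ Tr, ∃ v ∈ D, toCluster G s v = C) ∧
    (∀ Dr : Set V, IsConnSet G Dr → IsRPhiDomSet G r 0 Dr →
      (∀ D' : Set V, IsConnSet G D' → IsRPhiDomSet G r 0 D' → Dr.ncard ≤ D'.ncard) →
      Tr.ncard ≤ Dr.ncard) := by
  classical
  haveI : Finite (Cluster G s) := Quotient.finite _
  have hT : (clusterGraph G s).Connected := clusterGraph_connected hconn
  have hA : (clusterGraph G s).IsAcyclic := clusterGraph_acyclic hconn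
  have main : ∀ D : Set V, IsConnSet G D → IsRPhiDomSet G r 0 D → 1 < Tr.ncard →
      Tr ⊆ toCluster G s '' D := by
    intro D hDc hDd hcard
    have hT2 : IsDomSubtree G s r 0 (toCluster G s '' D) := image_isDomSubtree hconn r hDc hDd
    set T2 := toCluster G s '' D with hT2def
    have hTrval : ∀ C : Cluster G s, ∃ x ∈ Tr,
        (clusterGraph G s).dist C x ≤ clusterRadius G s r C := by
      intro C
      obtain ⟨x, hx, hdx⟩ := hTr.1.2 C
      exact ⟨x, hx, by omega⟩
    have hT2val : ∀ C : Cluster G s, ∃ x ∈ T2,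
        (clusterGraph G s).dist C x ≤ clusterRadius G s r C := by
      intro C
      obtain ⟨x, hx, hdx⟩ := hT2.2 C
      exact ⟨x, hx, by omega⟩
    have hTrW : ∀ x ∈ Tr, ∀ y ∈ Tr, ∀ z ∈ (tpath hT x y).support, z ∈ Tr := by
      intro x hx y hy
      obtain ⟨w, hw⟩ := walks_of_induce_connected hTr.1.1 hx hy
      exact tpath_support_subset hA hT w hw
    have hT2W : ∀ x ∈ T2, ∀ y ∈ T2, ∀ z ∈ (tpath hT x y).support, z ∈ T2 := by
      intro x hx y hy
      obtain ⟨w, hw⟩ := walks_of_induce_connected hT2.1 hx hy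
      exact tpath_support_subset hA hT w hw
    by_cases hint : (Tr ∩ T2).Nonempty
    · obtain ⟨w0, hw0r, hw0d⟩ := hint
      have hdom' : IsDomSubtree G s r 0 (Tr ∩ T2) := by
        constructor
        · show ((clusterGraph G s).induce (Tr ∩ T2)).Connected
          refine induce_connected_of_walks ⟨w0, hw0r, hw0d⟩ ?_
          intro x hx y hy
          exact ⟨tpath hT x y, fun z hz => ⟨hTrW x hx.1 y hy.1 z hz, hT2W x hx.2 y hy.2 z hz⟩⟩
        · intro C
          obtain ⟨x, hx, hdx⟩ := hTrval C
          obtain ⟨y, hy, hdy⟩ := hT2val C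
          obtain ⟨m1, hm1x, hm1w, hm1xw⟩ := median hA hT C x w0
          obtain ⟨m2, hm2y, hm2w, hm2yw⟩ := median hA hT C y w0
          have hm1Tr : m1 ∈ Tr := hTrW x hx w0 hw0r m1 hm1xw
          have hm2T2 : m2 ∈ T2 := hT2W y hy w0 hw0d m2 hm2yw
          have hd1 : (clusterGraph G s).dist C m1 ≤ clusterRadius G s r C := by
            have := dist_split hA hT hm1x
            omega
          have hd2 : (clusterGraph G s).dist C m2 ≤ clusterRadius G s r C := by
            have := dist_split hA hT hm2y
            omega
          rcases le_total ((clusterGraph G s).dist C m1) ((clusterGraph G s).dist C m2)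
            with hle | hle
          · have hmm : m2 ∈ (tpath hT m1 w0).support :=
              mem_tpath_of_dist_le hA hT hm2w hm1w hle
            exact ⟨m2, ⟨hTrW m1 hm1Tr w0 hw0r m2 hmm, hm2T2⟩, by omega⟩
          · have hmm : m1 ∈ (tpath hT m2 w0).support :=
              mem_tpath_of_dist_le hA hT hm1w hm2w hle
            exact ⟨m1, ⟨hm1Tr, hT2W m2 hm2T2 w0 hw0d m1 hmm⟩, by omega⟩
      have h1 := hTr.2 _ hdom'
      have heq := Set.eq_of_subset_of_ncard_le Set.inter_subset_left h1 (Set.toFinite Tr)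
      intro C hC
      rw [← heq] at hC
      exact hC.2
    · exfalso
      rw [Set.not_nonempty_iff_eq_empty] at hint
      have hTrne : Tr.Nonempty := Set.nonempty_of_ncard_ne_zero (by omega)
      have hT2ne : T2.Nonempty := by
        obtain ⟨y, hy, -⟩ := hT2val (toCluster G s s)
        exact ⟨y, hy⟩
      obtain ⟨a0, ha0⟩ := hTrne
      obtain ⟨b0, hb0⟩ := hT2ne
      set N : Set ℕ := {n | ∃ p ∈ Tr, ∃ q ∈ T2, (clusterGraph G s).dist p q = n} with hN
      have hNne : N.Nonempty := ⟨_, a0, ha0, b0, hb0, rfl⟩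
      obtain ⟨a, haTr, b, hbT2, hab⟩ := Nat.sInf_mem hNne
      have hminim : ∀ p ∈ Tr, ∀ q ∈ T2,
          (clusterGraph G s).dist a b ≤ (clusterGraph G s).dist p q := by
        intro p hp q hq
        rw [hab]
        exact Nat.sInf_le ⟨p, hp, q, hq, rfl⟩
      have F1 : ∀ x ∈ Tr, x ∈ (tpath hT a b).support → x = a := by
        intro x hx hxs
        have e1 := dist_split hA hT hxs
        have e2 := hminim x hx b hbT2
        have e3 : (clusterGraph G s).dist a x = 0 := by omega
        exact ((hT.dist_eq_zero_iff).mp e3).symm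
      have F2 : ∀ y ∈ T2, y ∈ (tpath hT a b).support → y = b := by
        intro y hy hys
        have e1 := dist_split hA hT hys
        have e2 := hminim a haTr y hy
        have e3 : (clusterGraph G s).dist y b = 0 := by omega
        exact (hT.dist_eq_zero_iff).mp e3
      have hdoma : IsDomSubtree G s r 0 {a} := by
        refine ⟨isSubtree_singleton G s a, ?_⟩
        intro C
        refine ⟨a, rfl, ?_⟩
        obtain ⟨x, hx, hdx⟩ := hTrval C
        obtain ⟨y, hy, hdy⟩ := hT2val C
        have hQ : ((tpath hT a b).append (tpath hT b y)).IsPath := by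
          apply aux_isPath_append (tpath_isPath _ _ _) (tpath_isPath _ _ _)
          intro z hz1 hz2
          exact F2 z (hT2W b hbT2 y hy z hz2) hz1
        have hP : ((tpath hT x a).append ((tpath hT a b).append (tpath hT b y))).IsPath := by
          apply aux_isPath_append (tpath_isPath _ _ _) hQ
          intro z hz1 hz2
          have hzTr : z ∈ Tr := hTrW x hx a haTr z hz1
          rcases (Walk.mem_support_append_iff _ _).mp hz2 with hz | hz
          · exact F1 z hzTr hz
          · exfalso
            have hzT2 : z ∈ T2 := hT2W b hbT2 y hy z hz
            have hmem : z ∈ Tr ∩ T2 := ⟨hzTr, hzT2⟩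
            rw [hint] at hmem
            exact hmem
        have hPeq := eq_tpath hA hT _ hP
        have haP : a ∈ (tpath hT x y).support := by
          rw [← hPeq, Walk.mem_support_append_iff]
          exact Or.inl (Walk.end_mem_support _)
        obtain ⟨m, hmx, hmy, hmxy⟩ := median hA hT C x y
        rcases le_total ((clusterGraph G s).dist x m) ((clusterGraph G s).dist x a)
          with hle | hle
        · have haM : a ∈ (tpath hT m y).support := mem_tpath_of_dist_le hA hT haP hmxy hle
          have e1 := dist_split hA hT haM
          have e2 := dist_split hA hT hmy
          have e3 := hT.dist_triangle (u := C) (v := m) (w := a)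
          omega
        · have hmM : m ∈ (tpath hT a y).support := mem_tpath_of_dist_le hA hT hmxy haP hle
          have e1 := dist_split hA hT hmM
          have e2 := dist_split hA hT haP
          have e3 := dist_split hA hT hmxy
          have e4 := dist_split hA hT hmx
          have e5 := hT.dist_triangle (u := C) (v := m) (w := a)
          have c1 : (clusterGraph G s).dist m x = (clusterGraph G s).dist x m :=
            SimpleGraph.dist_comm
          have c2 : (clusterGraph G s).dist m a = (clusterGraph G s).dist a m :=
            SimpleGraph.dist_comm
          omega
      have hcard1 := hTr.2 _ hdoma
      rw [Set.ncard_singleton] at hcard1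
      omega
  constructor
  · intro hcard D hDc hDd C hC
    obtain ⟨v, hv, hvC⟩ := main D hDc hDd hcard hC
    exact ⟨v, hv, hvC⟩
  · intro Dr hDc hDd _
    have hT2 := image_isDomSubtree (s := s) hconn r hDc hDd
    exact le_trans (hTr.2 _ hT2) (Set.ncard_image_le (Set.toFinite Dr))
end

section
/- Let 𝒯 be a layering partition of a finite connected graph G with maximum cluster diameter Δ, r : V → ℕ, δ a non-negative integer, and let T_δ be a minimum (r+δ)-dominating subtree of 𝒯. Then every vertex set S ⊆ V that intersects all clusters of T_δ is an (r + (δ+Δ))-dominating set of G. -/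
open SimpleGraph

variable {V : Type}

section Aux

/-- `a` is a `j`-ancestor of `x`: `a` lies in layer `j` and is reachable from `x`
by a walk staying in layers `≥ j`. -/
def anc (G : SimpleGraph V) (s : V) (j : ℕ) (x a : V) : Prop :=
  G.dist s a = j ∧ ∃ w : G.Walk x a, ∀ y ∈ w.support, j ≤ G.dist s y

lemma anc_le_dist {G : SimpleGraph V} {s : V} {j : ℕ} {x a : V}
    (h : anc G s j x a) : j ≤ G.dist s x := by
  obtain ⟨-, w, hw⟩ := h
  exact hw x w.start_mem_support

lemma anc_refl (G : SimpleGraph V) (s x : V) : anc G s (G.dist s x) x x :=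
  ⟨rfl, SimpleGraph.Walk.nil, by simp⟩

lemma anc_layerRel {G : SimpleGraph V} {s : V} {j : ℕ} {x a : V}
    (hx : G.dist s x = j) (h : anc G s j x a) : layerRel G s x a := by
  obtain ⟨ha, w, hw⟩ := h
  exact ⟨hx.trans ha.symm, w, fun y hy => hx ▸ hw y hy⟩

lemma anc_same {G : SimpleGraph V} {s : V} {j : ℕ} {x a b : V}
    (ha : anc G s j x a) (hb : anc G s j x b) : layerRel G s a b := by
  obtain ⟨ha1, wa, hwa⟩ := ha
  obtain ⟨hb1, wb, hwb⟩ := hb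
  refine ⟨ha1.trans hb1.symm, wa.reverse.append wb, fun y hy => ?_⟩
  rcases (SimpleGraph.Walk.mem_support_append_iff _ _).mp hy with h | h
  · exact ha1 ▸ hwa y (by simpa using h)
  · exact ha1 ▸ hwb y h

lemma anc_rel_s4 {G : SimpleGraph V} {s : V} {j : ℕ} {x y a : V}
    (hxy : layerRel G s x y) (ha : anc G s j x a) : anc G s j y a := by
  have hj : j ≤ G.dist s x := anc_le_dist ha
  obtain ⟨ha1, wa, hwa⟩ := ha
  obtain ⟨h1, w, hw⟩ := hxy
  refine ⟨ha1, w.reverse.append wa, fun z hz => ?_⟩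
  rcases (SimpleGraph.Walk.mem_support_append_iff _ _).mp hz with h | h
  · exact hj.trans (hw z (by simpa using h))
  · exact hwa z h

lemma anc_adj {G : SimpleGraph V} {s : V} {j : ℕ} {x y a : V}
    (hadj : G.Adj y x) (hy : j ≤ G.dist s y) (ha : anc G s j x a) :
    anc G s j y a := by
  obtain ⟨ha1, wa, hwa⟩ := ha
  refine ⟨ha1, SimpleGraph.Walk.cons hadj wa, fun z hz => ?_⟩
  rw [SimpleGraph.Walk.support_cons] at hz
  rcases List.mem_cons.mp hz with h | h
  · exact h ▸ hy
  · exact hwa z h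

lemma anc_trans {G : SimpleGraph V} {s : V} {j j' : ℕ} {x a c : V}
    (h : j' ≤ j) (ha : anc G s j x a) (hc : anc G s j' a c) :
    anc G s j' x c := by
  obtain ⟨ha1, wa, hwa⟩ := ha
  obtain ⟨hc1, wc, hwc⟩ := hc
  refine ⟨hc1, wa.append wc, fun z hz => ?_⟩
  rcases (SimpleGraph.Walk.mem_support_append_iff _ _).mp hz with hh | hh
  · exact h.trans (hwa z hh)
  · exact hwc z hh

lemma exists_adj_dist_sub_one {G : SimpleGraph V} (hconn : G.Connected) {s x : V}
    (h : 0 < G.dist s x) : ∃ x₁, G.Adj x x₁ ∧ G.dist s x₁ + 1 = G.dist s x := by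
  obtain ⟨p, hp⟩ := hconn.exists_walk_length_eq_dist x s
  cases p with
  | nil => rw [SimpleGraph.dist_comm] at h; simp at hp; simp at h
  | @cons _ x₁ _ hadj q =>
    refine ⟨x₁, hadj, ?_⟩
    rw [SimpleGraph.Walk.length_cons, SimpleGraph.dist_comm] at hp
    have hx1le : G.dist s x₁ ≤ q.length := SimpleGraph.dist_comm (G := G) ▸
      SimpleGraph.dist_le q
    have htr := hconn.dist_triangle (u := s) (v := x₁) (w := x)
    have hd1 : G.dist x₁ x = 1 := SimpleGraph.dist_eq_one_iff_adj.mpr hadj.symm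
    omega

lemma anc_exists_aux {G : SimpleGraph V} (hconn : G.Connected) (s : V) (j : ℕ) :
    ∀ (k : ℕ) (x : V), G.dist s x = j + k →
      ∃ a, anc G s j x a ∧ G.dist x a + j ≤ G.dist s x := by
  intro k
  induction k with
  | zero =>
    intro x hx
    refine ⟨x, ⟨by omega, SimpleGraph.Walk.nil, ?_⟩, ?_⟩
    · intro y hy
      rw [SimpleGraph.Walk.support_nil, List.mem_singleton] at hy
      subst hy; omega
    · rw [SimpleGraph.dist_self]; omega
  | succ k ih =>
    intro x hx
    obtain ⟨x₁, hadj, hd⟩ := exists_adj_dist_sub_one hconn (s := s) (x := x) (by omega)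
    obtain ⟨a, ha, hda⟩ := ih x₁ (by omega)
    refine ⟨a, anc_adj hadj (by omega) ha, ?_⟩
    have htr : G.dist x a ≤ G.dist x x₁ + G.dist x₁ a := hconn.dist_triangle
    have hd1 : G.dist x x₁ = 1 := SimpleGraph.dist_eq_one_iff_adj.mpr hadj
    omega

lemma anc_exists {G : SimpleGraph V} (hconn : G.Connected) (s x : V) {j : ℕ}
    (hj : j ≤ G.dist s x) : ∃ a, anc G s j x a ∧ G.dist x a + j ≤ G.dist s x :=
  anc_exists_aux hconn s j (G.dist s x - j) x (by omega)

/-- Along a walk in `G`, the clusters stay reachable in the cluster graph. -/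
lemma cluster_reachable {G : SimpleGraph V} {s : V} :
    ∀ {x y : V}, G.Walk x y →
      (clusterGraph G s).Reachable (toCluster G s x) (toCluster G s y) := by
  intro x y p
  induction p with
  | nil => exact SimpleGraph.Reachable.refl _
  | @cons x x₁ y hadj q ih =>
    by_cases h : toCluster G s x = toCluster G s x₁
    · rwa [h]
    · exact (SimpleGraph.Adj.reachable
        (show (clusterGraph G s).Adj (toCluster G s x) (toCluster G s x₁) from
          ⟨h, x, x₁, rfl, rfl, hadj⟩)).trans ih

/-- Main lemma: a walk of length `k` in the cluster graph between the clusters of `x`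
and `y` yields a common ancestor layer `j` with
`dist s x + dist s y ≤ k + 2 j`. -/
lemma cluster_walk_common_anc {G : SimpleGraph V} (hconn : G.Connected) {s : V} :
    ∀ {C C' : Cluster G s} (w : (clusterGraph G s).Walk C C') (x y : V),
      toCluster G s x = C → toCluster G s y = C' →
      ∃ j a b, anc G s j x a ∧ anc G s j y b ∧ layerRel G s a b ∧
        G.dist s x + G.dist s y ≤ w.length + 2 * j := by
  intro C C' w
  induction w with
  | nil =>
    intro x y hx hy
    have hxy : layerRel G s x y := Quotient.exact (hx.trans hy.symm)
    refine ⟨G.dist s x, x, y, anc_refl G s x, ?_, hxy, ?_⟩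
    · rw [hxy.1]; exact anc_refl G s y
    · rw [hxy.1]; omega
  | @cons C C₁ C' hadj w' ih =>
    intro x y hx hy
    obtain ⟨hne, u, v', hu, hv', huv⟩ := hadj
    obtain ⟨j, a, b, ha, hb, hab, hsum⟩ := ih v' y hv' hy
    have hlxu : layerRel G s x u := Quotient.exact (hx.trans hu.symm)
    have hdxu : G.dist s x = G.dist s u := hlxu.1
    have hneuv : G.dist s u ≠ G.dist s v' := by
      intro h
      apply hne
      rw [← hu, ← hv']
      refine Quotient.sound ⟨h, SimpleGraph.Walk.cons huv SimpleGraph.Walk.nil, ?_⟩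
      intro z hz
      simp only [SimpleGraph.Walk.support_cons, SimpleGraph.Walk.support_nil,
        List.mem_cons, List.mem_singleton] at hz
      rcases hz with rfl | rfl | h'
      · exact le_refl _
      · omega
      · exact absurd h' (by simp)
    have hduv : G.dist s u ≤ G.dist s v' + 1 := by
      have := hconn.dist_triangle (u := s) (v := v') (w := u)
      have : G.dist v' u = 1 := SimpleGraph.dist_eq_one_iff_adj.mpr huv.symm
      omega
    have hdvu : G.dist s v' ≤ G.dist s u + 1 := by
      have := hconn.dist_triangle (u := s) (v := u) (w := v')
      have : G.dist u v' = 1 := SimpleGraph.dist_eq_one_iff_adj.mpr huv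
      omega
    have hjv' : j ≤ G.dist s v' := anc_le_dist ha
    have hjy : j ≤ G.dist s y := anc_le_dist hb
    show ∃ j a b, anc G s j x a ∧ anc G s j y b ∧ layerRel G s a b ∧
      G.dist s x + G.dist s y ≤ w'.length + 1 + 2 * j
    by_cases hj : j ≤ G.dist s u
    · -- prepend the edge `u v'` to the ancestor walk
      have ha' : anc G s j u a := anc_adj huv hj ha
      have ha'' : anc G s j x a := anc_rel_s4 (layerRel_symm G s hlxu) ha'
      exact ⟨j, a, b, ha'', hb, hab, by omega⟩
    · -- here `j = dist s v' = dist s u + 1`; move one layer up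
      have hjeq : j = G.dist s v' := by omega
      have hjeq' : j = G.dist s u + 1 := by omega
      obtain ⟨b'', hb'', -⟩ := anc_exists hconn s b
        (j := G.dist s u) (by rw [hb.1]; omega)
      have h2 : anc G s (G.dist s u) y b'' := anc_trans (by omega) hb hb''
      have hlv'a : layerRel G s v' a := anc_layerRel hjeq.symm ha
      have hlv'b : layerRel G s v' b := layerRel_trans G s hlv'a hab
      have h4 : anc G s (G.dist s u) v' b'' :=
        anc_rel_s4 (layerRel_symm G s hlv'b) hb''
      have h5 : anc G s (G.dist s u) u b'' := anc_adj huv (le_refl _) h4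
      have h6 : anc G s (G.dist s u) x b'' := anc_rel_s4 (layerRel_symm G s hlxu) h5
      exact ⟨G.dist s u, b'', b'', h6, h2, layerRel_refl G s b'', by omega⟩

end Aux

/-- If `T_δ` is a minimum `(r+δ)`-dominating subtree of the layering
partition 𝒯 (maximum cluster diameter `Δ`), then any vertex set `S` intersecting all
clusters of `T_δ` is an `(r + (δ+Δ))`-dominating set of `G`. -/
theorem transversal_of_Tdelta_is_dominating
    {V : Type} [Fintype V] (G : SimpleGraph V) (hconn : G.Connected)
    (s : V) (Δ : ℕ) (hΔ : IsMaxClusterDiam G s Δ)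
    (r : V → ℕ) (δ : ℕ) (Tδ : Set (Cluster G s))
    (hTδ : IsMinDomSubtree G s r δ Tδ)
    (S : Set V) (hS : ∀ C ∈ Tδ, ∃ v ∈ S, toCluster G s v = C) :
    IsRPhiDomSet G r (δ + Δ) S := by
  intro v
  obtain ⟨C', hC'T, hdist⟩ := hTδ.1.2 (toCluster G s v)
  obtain ⟨u, huS, huC⟩ := hS C' hC'T
  refine ⟨u, huS, ?_⟩
  have hrad : clusterRadius G s r (toCluster G s v) ≤ r v := Nat.sInf_le ⟨v, rfl, rfl⟩
  have hreach : (clusterGraph G s).Reachable (toCluster G s v) C' :=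
    huC ▸ cluster_reachable (hconn.preconnected v u).some
  obtain ⟨w, hw⟩ := hreach.exists_walk_length_eq_dist
  obtain ⟨j, a, b, ha, hb, hab, hsum⟩ := cluster_walk_common_anc hconn w v u rfl huC
  obtain ⟨a', ha', hda⟩ := anc_exists hconn s v (anc_le_dist ha)
  obtain ⟨b', hb', hdb⟩ := anc_exists hconn s u (anc_le_dist hb)
  have hrel : layerRel G s a' b' :=
    layerRel_trans G s (anc_same ha' ha) (layerRel_trans G s hab (anc_same hb hb'))
  have hDab : G.dist a' b' ≤ Δ := hΔ.2 ⟨a', b', hrel, rfl⟩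
  have ht1 : G.dist v u ≤ G.dist v a' + G.dist a' u := hconn.dist_triangle
  have ht2 : G.dist a' u ≤ G.dist a' b' + G.dist b' u := hconn.dist_triangle
  have hcomm : G.dist b' u = G.dist u b' := SimpleGraph.dist_comm
  have hwlen : w.length ≤ r v + δ := by
    rw [hw]; exact hdist.trans (by omega)
  omega
end

section
/- Let 𝒯 be a layering partition of a finite connected graph G, r : V → ℕ, δ a non-negative integer, let T_r be a minimum r-dominating subtree of 𝒯, and let T_δ be a minimum (r+δ)-dominating subtree of 𝒯 (a minimum δ-dominating subtree of T_r). Then |T_δ| ≤ |T_r| − δ·Λ(T_δ), where |T| denotes the number of clusters of a subtree T and Λ(T_δ) is the number of leaves of the rooted tree T_δ. -/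
open SimpleGraph

variable {V : Type}

namespace LayerTree

open SimpleGraph Walk

variable {V : Type} (G : SimpleGraph V) (s : V)

noncomputable def lev : Cluster G s → ℕ :=
  Quotient.lift (G.dist s) (fun _ _ h => h.1)

lemma lev_toCluster (v : V) : lev G s (toCluster G s v) = G.dist s v := rfl

def root : Cluster G s := toCluster G s s

lemma exists_rep (C : Cluster G s) : ∃ v, toCluster G s v = C :=
  Quotient.exists_rep C

lemma lev_root : lev G s (root G s) = 0 := by
  simp [root, lev_toCluster]

variable {G s}

lemma lev_eq_zero_iff (hconn : G.Connected) {C : Cluster G s} :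
    lev G s C = 0 ↔ C = root G s := by
  obtain ⟨v, rfl⟩ := exists_rep G s C
  rw [lev_toCluster]
  constructor
  · intro h
    have : s = v := (hconn.dist_eq_zero_iff).mp h
    rw [← this]; rfl
  · intro h
    have := congrArg (lev G s) h
    simpa [lev_toCluster, lev_root] using this

lemma toCluster_eq_of_adj {u v : V} (h : G.Adj u v) (hd : G.dist s u = G.dist s v) :
    toCluster G s u = toCluster G s v := by
  refine Quotient.sound ⟨hd, Walk.cons h Walk.nil, ?_⟩
  intro x hx
  simp [Walk.support_cons, Walk.support_nil] at hx
  rcases hx with rfl | rfl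
  · exact le_refl _
  · rw [hd]

lemma dist_le_succ_of_adj (hconn : G.Connected) {u v : V} (h : G.Adj u v) :
    G.dist s v ≤ G.dist s u + 1 := by
  have h1 : G.dist u v = 1 := SimpleGraph.dist_eq_one_iff_adj.mpr h
  have := hconn.dist_triangle (u := s) (v := u) (w := v)
  omega

lemma adj_lev (hconn : G.Connected) {C C' : Cluster G s}
    (h : (clusterGraph G s).Adj C C') :
    lev G s C' + 1 = lev G s C ∨ lev G s C + 1 = lev G s C' := by
  obtain ⟨hne, u, v, hu, hv, ha⟩ := h
  subst hu; subst hv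
  rw [lev_toCluster, lev_toCluster]
  have h1 := dist_le_succ_of_adj (s := s) hconn ha
  have h2 := dist_le_succ_of_adj (s := s) hconn ha.symm
  have h3 : G.dist s u ≠ G.dist s v := fun hd => hne (toCluster_eq_of_adj ha hd)
  omega

lemma exists_adj_dist_pred (hconn : G.Connected) {v : V} {n : ℕ}
    (h : G.dist s v = n + 1) : ∃ u, G.Adj u v ∧ G.dist s u = n := by
  obtain ⟨p, hp⟩ := hconn.exists_walk_length_eq_dist s v
  have hq : p.reverse.length = n + 1 := by rw [Walk.length_reverse, hp, h]
  cases hq' : p.reverse with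
  | nil => rw [hq'] at hq; simp at hq
  | cons hadj q =>
    rename_i x
    rw [hq'] at hq
    simp [Walk.length_cons] at hq
    refine ⟨x, hadj.symm, ?_⟩
    have h1 : G.dist s x ≤ n := by
      have := G.dist_le q.reverse
      rwa [Walk.length_reverse, hq] at this
    have h2 := dist_le_succ_of_adj (s := s) hconn (hadj.symm : G.Adj x v)
    omega

lemma exists_parent (hconn : G.Connected) {C : Cluster G s} (h : lev G s C ≠ 0) :
    ∃ C', (clusterGraph G s).Adj C C' ∧ lev G s C' + 1 = lev G s C := by
  obtain ⟨v, rfl⟩ := exists_rep G s C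
  rw [lev_toCluster] at h ⊢
  obtain ⟨n, hn⟩ : ∃ n, G.dist s v = n + 1 := ⟨G.dist s v - 1, by omega⟩
  obtain ⟨u, hadj, hu⟩ := exists_adj_dist_pred hconn hn
  refine ⟨toCluster G s u, ⟨?_, v, u, rfl, rfl, hadj.symm⟩, ?_⟩
  · intro he
    have := congrArg (lev G s) he
    rw [lev_toCluster, lev_toCluster] at this
    omega
  · rw [lev_toCluster]; omega

lemma parent_unique (hconn : G.Connected) {C C1 C2 : Cluster G s}
    (h1 : (clusterGraph G s).Adj C C1) (h2 : (clusterGraph G s).Adj C C2)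
    (l1 : lev G s C1 + 1 = lev G s C) (l2 : lev G s C2 + 1 = lev G s C) :
    C1 = C2 := by
  obtain ⟨ne1, a1, b1, ha1, hb1, e1⟩ := h1
  obtain ⟨ne2, a2, b2, ha2, hb2, e2⟩ := h2
  have hr : layerRel G s a1 a2 := Quotient.exact (ha1.trans ha2.symm)
  obtain ⟨hd, w, hw⟩ := hr
  have hda1 : G.dist s a1 = lev G s C := by rw [← ha1, lev_toCluster]
  have hda2 : G.dist s a2 = lev G s C := by rw [← ha2, lev_toCluster]
  have hdb1 : G.dist s b1 = lev G s C1 := by rw [← hb1, lev_toCluster]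
  have hdb2 : G.dist s b2 = lev G s C2 := by rw [← hb2, lev_toCluster]
  have key : toCluster G s b1 = toCluster G s b2 := by
    refine Quotient.sound ⟨by omega, Walk.cons e1.symm (w.append (Walk.cons e2 Walk.nil)), ?_⟩
    intro x hx
    rw [Walk.support_cons] at hx
    simp only [List.mem_cons] at hx
    rcases hx with rfl | hx
    · exact le_refl _
    rw [Walk.mem_support_append_iff] at hx
    rcases hx with hx | hx
    · have := hw x hx
      omega
    · simp [Walk.support_cons, Walk.support_nil] at hx
      rcases hx with rfl | rfl
      · omega
      · omega
  rw [← hb1, ← hb2, key]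




open SimpleGraph Walk

variable {V : Type} {G : SimpleGraph V} {s : V}

noncomputable def par (hconn : G.Connected) (C : Cluster G s) : Cluster G s :=
  if h : lev G s C = 0 then C else (exists_parent hconn h).choose

variable (hconn : G.Connected)

lemma par_spec {C : Cluster G s} (h : lev G s C ≠ 0) :
    (clusterGraph G s).Adj C (par hconn C) ∧ lev G s (par hconn C) + 1 = lev G s C := by
  rw [par, dif_neg h]
  exact (exists_parent hconn h).choose_spec

lemma par_of_lev_zero {C : Cluster G s} (h : lev G s C = 0) : par hconn C = C := by
  rw [par, dif_pos h]

lemma lev_par (C : Cluster G s) : lev G s (par hconn C) = lev G s C - 1 := by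
  by_cases h : lev G s C = 0
  · rw [par_of_lev_zero hconn h, h]
  · have := (par_spec hconn h).2; omega

lemma par_eq_of_adj {C C' : Cluster G s}
    (h : (clusterGraph G s).Adj C C') (hl : lev G s C' + 1 = lev G s C) :
    par hconn C = C' := by
  have h0 : lev G s C ≠ 0 := by omega
  obtain ⟨ha, hl'⟩ := par_spec hconn h0
  exact parent_unique hconn ha h hl' hl

lemma adj_cases {C C' : Cluster G s} (h : (clusterGraph G s).Adj C C') :
    (lev G s C' + 1 = lev G s C ∧ par hconn C = C') ∨
    (lev G s C + 1 = lev G s C' ∧ par hconn C' = C) := by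
  rcases adj_lev hconn h with hl | hl
  · exact Or.inl ⟨hl, par_eq_of_adj hconn h hl⟩
  · exact Or.inr ⟨hl, par_eq_of_adj hconn h.symm hl⟩

noncomputable def anc (C : Cluster G s) (n : ℕ) : Cluster G s :=
  (par hconn)^[n] C

lemma anc_zero (C : Cluster G s) : anc hconn C 0 = C := rfl

lemma anc_succ (C : Cluster G s) (n : ℕ) :
    anc hconn C (n + 1) = par hconn (anc hconn C n) :=
  Function.iterate_succ_apply' _ _ _

lemma anc_add (C : Cluster G s) (m n : ℕ) :
    anc hconn C (m + n) = anc hconn (anc hconn C n) m :=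
  Function.iterate_add_apply _ _ _ _

lemma anc_succ' (C : Cluster G s) (n : ℕ) :
    anc hconn C (n + 1) = anc hconn (par hconn C) n :=
  Function.iterate_succ_apply _ _ _

lemma lev_anc (C : Cluster G s) (n : ℕ) :
    lev G s (anc hconn C n) = lev G s C - n := by
  induction n with
  | zero => rfl
  | succ n ih => rw [anc_succ, lev_par hconn, ih]; omega

lemma anc_eq_root (C : Cluster G s) {n : ℕ} (h : lev G s C ≤ n) :
    anc hconn C n = root G s := by
  have := lev_anc hconn C n
  rw [← lev_eq_zero_iff hconn]; omega

lemma anc_root (n : ℕ) : anc hconn (root G s) n = root G s :=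
  anc_eq_root hconn _ (by rw [lev_root]; omega)

lemma anc_lev (C : Cluster G s) : anc hconn C (lev G s C) = root G s :=
  anc_eq_root hconn C le_rfl

lemma reachable_root (hconn : G.Connected) (C : Cluster G s) :
    (clusterGraph G s).Reachable C (root G s) := by
  generalize hn : lev G s C = n
  induction n using Nat.strong_induction_on generalizing C with
  | _ n ih =>
    by_cases h : lev G s C = 0
    · rw [lev_eq_zero_iff hconn] at h; rw [h]
    · have hs := par_spec hconn h
      exact hs.1.reachable.trans (ih (lev G s (par hconn C)) (by omega) _ rfl)

lemma clusterGraph_connected (hconn : G.Connected) : (clusterGraph G s).Connected := by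
  rw [SimpleGraph.connected_iff]
  exact ⟨fun a b => (reachable_root hconn a).trans (reachable_root hconn b).symm,
    ⟨root G s⟩⟩

lemma dist_anc (C : Cluster G s) (n : ℕ) :
    (clusterGraph G s).dist C (anc hconn C n) ≤ n := by
  induction n with
  | zero => simp [anc_zero]
  | succ n ih =>
    have tri := (clusterGraph_connected hconn).dist_triangle
      (u := C) (v := anc hconn C n) (w := anc hconn C (n+1))
    have h2 : (clusterGraph G s).dist (anc hconn C n) (anc hconn C (n+1)) ≤ 1 := by
      by_cases h : lev G s (anc hconn C n) = 0
      · rw [anc_succ, par_of_lev_zero hconn h, SimpleGraph.dist_self]; omega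
      · rw [anc_succ]
        have := (par_spec hconn h).1
        have := SimpleGraph.dist_eq_one_iff_adj.mpr this
        omega
    omega

lemma dist_le_witness {x y : Cluster G s} {i j : ℕ}
    (h : anc hconn x i = anc hconn y j) :
    (clusterGraph G s).dist x y ≤ i + j := by
  have t1 := dist_anc hconn x i
  have t2 := dist_anc hconn y j
  have tri := (clusterGraph_connected hconn).dist_triangle
    (u := x) (v := anc hconn x i) (w := y)
  rw [h] at t1 tri
  rw [SimpleGraph.dist_comm (G := clusterGraph G s) (u := anc hconn y j) (v := y)] at tri
  omega

lemma exists_witness_of_walk {x y : Cluster G s} (p : (clusterGraph G s).Walk x y) :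
    ∃ i j, i + j ≤ p.length ∧ anc hconn x i = anc hconn y j := by
  induction p with
  | nil => exact ⟨0, 0, by simp, rfl⟩
  | cons hadj p ih =>
    rename_i a b c
    obtain ⟨i, j, hle, hw⟩ := ih
    rw [Walk.length_cons]
    rcases adj_cases hconn hadj with ⟨_, hp⟩ | ⟨_, hp⟩
    · -- par a = b : anc a (i+1) = anc b i
      refine ⟨i + 1, j, by omega, ?_⟩
      rw [anc_succ', hp, hw]
    · -- par b = a
      cases i with
      | zero =>
        -- b = anc c j, a = par b = anc c (j+1)
        refine ⟨0, j + 1, by omega, ?_⟩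
        rw [anc_zero] at hw ⊢
        rw [anc_succ, ← hw, hp]
      | succ i =>
        refine ⟨i, j, by omega, ?_⟩
        rw [anc_succ', hp] at hw
        exact hw

lemma exists_witness_dist (x y : Cluster G s) :
    ∃ i j, i + j = (clusterGraph G s).dist x y ∧ anc hconn x i = anc hconn y j := by
  obtain ⟨p, hp⟩ := (clusterGraph_connected hconn).exists_walk_length_eq_dist x y
  obtain ⟨i, j, hle, hw⟩ := exists_witness_of_walk hconn p
  rw [hp] at hle
  have := dist_le_witness hconn hw
  exact ⟨i, j, by omega, hw⟩




open SimpleGraph Walk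

variable {V : Type} {G : SimpleGraph V} {s : V} (hconn : G.Connected)

lemma exists_pair_witness (x y : Cluster G s) :
    ∃ p : ℕ × ℕ, p.1 + p.2 = (clusterGraph G s).dist x y ∧
      anc hconn x p.1 = anc hconn y p.2 := by
  obtain ⟨i, j, h1, h2⟩ := exists_witness_dist hconn x y
  exact ⟨(i, j), h1, h2⟩

noncomputable def mw (x y : Cluster G s) : ℕ × ℕ :=
  (exists_pair_witness hconn x y).choose

lemma mw_spec (x y : Cluster G s) :
    (mw hconn x y).1 + (mw hconn x y).2 = (clusterGraph G s).dist x y ∧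
      anc hconn x (mw hconn x y).1 = anc hconn y (mw hconn x y).2 :=
  (exists_pair_witness hconn x y).choose_spec

noncomputable def meet (x y : Cluster G s) : Cluster G s :=
  anc hconn x (mw hconn x y).1

lemma mw_le (x y : Cluster G s) :
    (mw hconn x y).1 ≤ lev G s x ∧ (mw hconn x y).2 ≤ lev G s y := by
  obtain ⟨hsum, hw⟩ := mw_spec hconn x y
  constructor
  · by_contra h
    push_neg at h
    have h1 : anc hconn x (mw hconn x y).1 = root G s :=
      anc_eq_root hconn x (by omega)
    have h2 : anc hconn x (lev G s x) = root G s := anc_lev hconn x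
    have : (clusterGraph G s).dist x y ≤ lev G s x + (mw hconn x y).2 :=
      dist_le_witness hconn (by rw [h2, ← h1, hw])
    omega
  · by_contra h
    push_neg at h
    have h1 : anc hconn y (mw hconn x y).2 = root G s :=
      anc_eq_root hconn y (by omega)
    have h2 : anc hconn y (lev G s y) = root G s := anc_lev hconn y
    have : (clusterGraph G s).dist x y ≤ (mw hconn x y).1 + lev G s y :=
      dist_le_witness hconn (by rw [hw, h1, h2])
    omega

lemma lev_add_lev (x y : Cluster G s) :
    lev G s x + lev G s y =
      (clusterGraph G s).dist x y + 2 * lev G s (meet hconn x y) := by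
  obtain ⟨hsum, hw⟩ := mw_spec hconn x y
  obtain ⟨h1, h2⟩ := mw_le hconn x y
  have l1 : lev G s (meet hconn x y) = lev G s x - (mw hconn x y).1 :=
    lev_anc hconn x _
  have l2 : lev G s (meet hconn x y) = lev G s y - (mw hconn x y).2 := by
    rw [meet, hw]; exact lev_anc hconn y _
  omega

lemma witness_ge (x y : Cluster G s) {i j : ℕ}
    (h : anc hconn x i = anc hconn y j) :
    (mw hconn x y).1 ≤ i ∧ (mw hconn x y).2 ≤ j := by
  obtain ⟨hsum, hw⟩ := mw_spec hconn x y
  obtain ⟨h1, h2⟩ := mw_le hconn x y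
  have hd := dist_le_witness hconn h
  have lm1 : lev G s (meet hconn x y) = lev G s x - (mw hconn x y).1 :=
    lev_anc hconn x _
  have lm2 : lev G s (meet hconn x y) = lev G s y - (mw hconn x y).2 := by
    rw [meet, hw]; exact lev_anc hconn y _
  have lz1 : lev G s (anc hconn x i) = lev G s x - i := lev_anc hconn x i
  have lz2 : lev G s (anc hconn y j) = lev G s y - j := lev_anc hconn y j
  have lroot : lev G s (root G s) = 0 := lev_root G s
  constructor
  · by_contra hc
    push_neg at hc
    -- i < mi ≤ lev x
    by_cases hj : j ≤ lev G s y
    · -- exact levels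
      have : lev G s (anc hconn x i) = lev G s (anc hconn y j) := by rw [h]
      omega
    · have hr : anc hconn y j = root G s := anc_eq_root hconn y (by omega)
      rw [hr] at h
      rw [h] at lz1
      omega
  · by_contra hc
    push_neg at hc
    by_cases hi : i ≤ lev G s x
    · have : lev G s (anc hconn x i) = lev G s (anc hconn y j) := by rw [h]
      omega
    · have hr : anc hconn x i = root G s := anc_eq_root hconn x (by omega)
      rw [hr] at h
      rw [← h] at lz2
      omega

lemma witness_unique (x y : Cluster G s) {i j : ℕ}
    (h : anc hconn x i = anc hconn y j)
    (hsum : i + j = (clusterGraph G s).dist x y) :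
    i = (mw hconn x y).1 ∧ j = (mw hconn x y).2 := by
  have := witness_ge hconn x y h
  have := (mw_spec hconn x y).1
  omega

lemma mw_comm (x y : Cluster G s) :
    (mw hconn y x).1 = (mw hconn x y).2 ∧ (mw hconn y x).2 = (mw hconn x y).1 := by
  have h := (mw_spec hconn x y).2
  have hsum := (mw_spec hconn x y).1
  have := witness_unique hconn y x h.symm
    (by rw [SimpleGraph.dist_comm]; omega)
  omega

lemma meet_comm (x y : Cluster G s) : meet hconn y x = meet hconn x y := by
  rw [meet, (mw_comm hconn x y).1, ← (mw_spec hconn x y).2, meet]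

lemma dist_anc_eq (x : Cluster G s) {i : ℕ} (hi : i ≤ lev G s x) :
    (clusterGraph G s).dist x (anc hconn x i) = i := by
  refine le_antisymm (dist_anc hconn x i) ?_
  obtain ⟨⟨p, q⟩, hsum, hw⟩ := exists_pair_witness hconn x (anc hconn x i)
  simp only at hsum hw
  have hpq : anc hconn x p = anc hconn x (q + i) := by
    rw [hw, ← anc_add]
  by_cases h1 : q + i ≤ lev G s x
  · by_cases h2 : p ≤ lev G s x
    · have e1 : lev G s (anc hconn x p) = lev G s x - p := lev_anc hconn x p
      have e2 : lev G s (anc hconn x (q + i)) = lev G s x - (q + i) :=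
        lev_anc hconn x _
      rw [hpq] at e1
      omega
    · have : anc hconn x p = root G s := anc_eq_root hconn x (by omega)
      omega
  · have h3 : anc hconn x (q + i) = root G s := anc_eq_root hconn x (by omega)
    rw [h3] at hpq
    have : lev G s (anc hconn x p) = lev G s x - p := lev_anc hconn x p
    rw [hpq] at this
    have : lev G s (root G s) = 0 := lev_root G s
    omega

lemma adj_dist_cases (hconn : G.Connected) {C x y : Cluster G s} (h : (clusterGraph G s).Adj x y) :
    (clusterGraph G s).dist C y + 1 = (clusterGraph G s).dist C x ∨
    (clusterGraph G s).dist C x + 1 = (clusterGraph G s).dist C y := by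
  have h1 : (clusterGraph G s).dist x y = 1 := SimpleGraph.dist_eq_one_iff_adj.mpr h
  have tri1 := (clusterGraph_connected hconn).dist_triangle (u := C) (v := x) (w := y)
  have tri2 := (clusterGraph_connected hconn).dist_triangle (u := C) (v := y) (w := x)
  rw [SimpleGraph.dist_comm (G := clusterGraph G s) (u := y) (v := x)] at tri2
  have p1 := lev_add_lev hconn C x
  have p2 := lev_add_lev hconn C y
  have hl := adj_lev hconn h
  omega

lemma exists_dist_desc (hconn : G.Connected) {C x : Cluster G s} (h : x ≠ C) :
    ∃ y, (clusterGraph G s).Adj x y ∧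
      (clusterGraph G s).dist C y + 1 = (clusterGraph G s).dist C x := by
  have hpos : 0 < (clusterGraph G s).dist x C :=
    (clusterGraph_connected hconn).pos_dist_of_ne h
  obtain ⟨hsum, hw⟩ := mw_spec hconn x C
  obtain ⟨hle1, hle2⟩ := mw_le hconn x C
  have hcomm : (clusterGraph G s).dist C x = (clusterGraph G s).dist x C :=
    SimpleGraph.dist_comm
  by_cases hmi : (mw hconn x C).1 = 0
  · -- x is an ancestor of C; descend along C's chain
    have hx : x = anc hconn C (mw hconn x C).2 := by
      rw [← hw, hmi, anc_zero]
    have hmj : 0 < (mw hconn x C).2 := by omega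
    set j := (mw hconn x C).2 with hj
    refine ⟨anc hconn C (j - 1), ?_, ?_⟩
    · -- adjacency: par (anc C (j-1)) = anc C j = x, and lev (anc C (j-1)) ≠ 0
      have hpar : par hconn (anc hconn C (j - 1)) = x := by
        rw [hx, ← anc_succ hconn C (j - 1)]
        congr 1
        omega
      have hlev : lev G s (anc hconn C (j - 1)) ≠ 0 := by
        have e1 : lev G s (anc hconn C (j - 1)) = lev G s C - (j - 1) :=
          lev_anc hconn C _
        have e2 : lev G s x = lev G s C - j := by rw [hx]; exact lev_anc hconn C j
        omega
      have := (par_spec hconn hlev).1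
      rw [hpar] at this
      exact this.symm
    · have hub : (clusterGraph G s).dist (anc hconn C (j - 1)) C ≤ j - 1 := by
        have : anc hconn (anc hconn C (j - 1)) 0 = anc hconn C (j - 1) := rfl
        have hwit : anc hconn (anc hconn C (j - 1)) 0 = anc hconn C (j - 1) := rfl
        have := dist_le_witness hconn hwit
        omega
      have hlb := adj_dist_cases hconn (C := C)
        (x := x) (y := anc hconn C (j - 1)) ?adj
      · rw [SimpleGraph.dist_comm (G := clusterGraph G s)
          (u := anc hconn C (j-1)) (v := C)] at hub
        omega
      case adj =>
        have hpar : par hconn (anc hconn C (j - 1)) = x := by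
          rw [hx, ← anc_succ hconn C (j - 1)]
          congr 1
          omega
        have hlev : lev G s (anc hconn C (j - 1)) ≠ 0 := by
          have e1 : lev G s (anc hconn C (j - 1)) = lev G s C - (j - 1) :=
            lev_anc hconn C _
          have e2 : lev G s x = lev G s C - j := by rw [hx]; exact lev_anc hconn C j
          omega
        have := (par_spec hconn hlev).1
        rw [hpar] at this
        exact this.symm
  · -- descend to parent of x
    have hlev : lev G s x ≠ 0 := by omega
    refine ⟨par hconn x, (par_spec hconn hlev).1, ?_⟩
    have hub : (clusterGraph G s).dist (par hconn x) C ≤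
        ((mw hconn x C).1 - 1) + (mw hconn x C).2 := by
      refine dist_le_witness hconn ?_
      rw [← hw]
      rw [← anc_succ' hconn x ((mw hconn x C).1 - 1)]
      congr 1
      omega
    have hlb := adj_dist_cases hconn (C := C) (x := x) (y := par hconn x)
      (par_spec hconn hlev).1
    rw [SimpleGraph.dist_comm (G := clusterGraph G s) (u := par hconn x) (v := C)] at hub
    omega

lemma child_desc_eq {C x y : Cluster G s} (hpar : par hconn y = x) (hxy : y ≠ x)
    (hdesc : (clusterGraph G s).dist C y + 1 = (clusterGraph G s).dist C x) :
    y = anc hconn C ((clusterGraph G s).dist x C - 1) ∧ (mw hconn x C).1 = 0 := by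
  have hcomm : (clusterGraph G s).dist C x = (clusterGraph G s).dist x C :=
    SimpleGraph.dist_comm
  have hcommy : (clusterGraph G s).dist C y = (clusterGraph G s).dist y C :=
    SimpleGraph.dist_comm
  obtain ⟨hsum, hw⟩ := mw_spec hconn y C
  have ha : (mw hconn y C).1 = 0 := by
    by_contra hne
    have : anc hconn y (mw hconn y C).1 =
        anc hconn x ((mw hconn y C).1 - 1) := by
      rw [← hpar, ← anc_succ' hconn y ((mw hconn y C).1 - 1)]
      congr 1
      omega
    rw [this] at hw
    have := dist_le_witness hconn hw
    omega
  rw [ha, anc_zero] at hw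
  obtain ⟨b, hb2⟩ : ∃ b, (mw hconn y C).2 = b := ⟨_, rfl⟩
  rw [hb2] at hw hsum
  -- y = anc C b with b = dist y C
  have hb : b = (clusterGraph G s).dist x C - 1 := by omega
  have hxanc : anc hconn x 0 = anc hconn C (b + 1) := by
    rw [anc_zero, ← hpar, hw, anc_succ]
  have hmi := witness_unique hconn x C hxanc (by omega)
  refine ⟨?_, by omega⟩
  rw [hb] at hw
  exact hw

lemma dist_desc_unique (hconn : G.Connected) {C x y y' : Cluster G s}
    (h1 : (clusterGraph G s).Adj x y) (h2 : (clusterGraph G s).Adj x y')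
    (hd1 : (clusterGraph G s).dist C y + 1 = (clusterGraph G s).dist C x)
    (hd2 : (clusterGraph G s).dist C y' + 1 = (clusterGraph G s).dist C x) :
    y = y' := by
  have hcomm : (clusterGraph G s).dist C x = (clusterGraph G s).dist x C :=
    SimpleGraph.dist_comm
  -- helper: if y is a child of x (par y = x) then forced value
  have hchild : ∀ z, (clusterGraph G s).Adj x z → par hconn z = x →
      (clusterGraph G s).dist C z + 1 = (clusterGraph G s).dist C x →
      z = anc hconn C ((clusterGraph G s).dist x C - 1) ∧ (mw hconn x C).1 = 0 :=
    fun z hz hpz hdz => child_desc_eq hconn hpz hz.ne' hdz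
  have hparent : ∀ z, (clusterGraph G s).Adj x z → par hconn x = z →
      (clusterGraph G s).dist C z + 1 = (clusterGraph G s).dist C x →
      (mw hconn x C).1 ≠ 0 := by
    intro z hz hpz hdz hmi0
    -- x = anc C d; parent of x cannot decrease distance
    obtain ⟨⟨p, q⟩, hsum', hw'⟩ := exists_pair_witness hconn z C
    simp only at hsum' hw'
    have hwx : anc hconn x (p + 1) = anc hconn C q := by
      rw [← hw', ← hpz, ← anc_succ' hconn x p]
    have hcz : (clusterGraph G s).dist C z = (clusterGraph G s).dist z C :=
      SimpleGraph.dist_comm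
    have := (witness_unique hconn x C hwx (by omega)).1
    omega
  rcases adj_cases hconn h1 with ⟨_, hp1⟩ | ⟨_, hp1⟩ <;>
    rcases adj_cases hconn h2 with ⟨_, hp2⟩ | ⟨_, hp2⟩
  · rw [← hp1, ← hp2]
  · exact absurd ((hchild y' h2 hp2 hd2).2) (hparent y h1 hp1 hd1)
  · exact absurd ((hchild y h1 hp1 hd1).2) (hparent y' h2 hp2 hd2)
  · rw [(hchild y h1 hp1 hd1).1, (hchild y' h2 hp2 hd2).1]




open SimpleGraph Walk

variable {V : Type} {G : SimpleGraph V} {s : V}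

def Btw (G : SimpleGraph V) (s : V) (x z y : Cluster G s) : Prop :=
  (clusterGraph G s).dist x z + (clusterGraph G s).dist z y =
    (clusterGraph G s).dist x y

lemma btw_left (x y : Cluster G s) : Btw G s x x y := by
  simp [Btw]

lemma btw_right (x y : Cluster G s) : Btw G s x y y := by
  simp [Btw]

lemma btw_symm {x z y : Cluster G s} (h : Btw G s x z y) : Btw G s y z x := by
  unfold Btw at h ⊢
  rw [SimpleGraph.dist_comm (G := clusterGraph G s) (u := y) (v := z),
    SimpleGraph.dist_comm (G := clusterGraph G s) (u := z) (v := x),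
    SimpleGraph.dist_comm (G := clusterGraph G s) (u := y) (v := x)]
  omega

lemma btw_comp (hconn : G.Connected) {a b c d : Cluster G s}
    (h1 : Btw G s a b c) (h2 : Btw G s a c d) :
    Btw G s a b d ∧ Btw G s b c d := by
  unfold Btw at *
  have T : (clusterGraph G s).Connected := clusterGraph_connected hconn
  have t1 := T.dist_triangle (u := a) (v := b) (w := d)
  have t2 := T.dist_triangle (u := b) (v := c) (w := d)
  have t3 := T.dist_triangle (u := a) (v := c) (w := d)
  have t4 := T.dist_triangle (u := a) (v := b) (w := c)
  omega

lemma exists_btw_at (hconn : G.Connected) {a b : Cluster G s} {t : ℕ}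
    (ht : t ≤ (clusterGraph G s).dist a b) :
    ∃ z, (clusterGraph G s).dist a z = t ∧ Btw G s a z b := by
  induction t with
  | zero => exact ⟨a, SimpleGraph.dist_self, btw_left a b⟩
  | succ t ih =>
    obtain ⟨z, hz1, hz2⟩ := ih (by omega)
    unfold Btw at hz2
    have hzb : z ≠ b := by
      intro h
      rw [h] at hz1
      omega
    obtain ⟨y, hadj, hy⟩ := exists_dist_desc hconn (C := b) hzb
    have hcom1 : (clusterGraph G s).dist b y = (clusterGraph G s).dist y b :=
      SimpleGraph.dist_comm
    have hcom2 : (clusterGraph G s).dist b z = (clusterGraph G s).dist z b :=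
      SimpleGraph.dist_comm
    have hd1 : (clusterGraph G s).dist z y = 1 := SimpleGraph.dist_eq_one_iff_adj.mpr hadj
    have T : (clusterGraph G s).Connected := clusterGraph_connected hconn
    have t1 := T.dist_triangle (u := a) (v := z) (w := y)
    have t2 := T.dist_triangle (u := a) (v := y) (w := b)
    refine ⟨y, by omega, ?_⟩
    unfold Btw
    omega

lemma btw_unique (hconn : G.Connected) {t : ℕ} {a b z z' : Cluster G s}
    (h1 : Btw G s a z b) (h2 : Btw G s a z' b)
    (d1 : (clusterGraph G s).dist a z = t) (d2 : (clusterGraph G s).dist a z' = t) :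
    z = z' := by
  have T : (clusterGraph G s).Connected := clusterGraph_connected hconn
  induction t generalizing a with
  | zero =>
    have e1 : a = z := T.dist_eq_zero_iff.mp d1
    have e2 : a = z' := T.dist_eq_zero_iff.mp d2
    rw [← e1, ← e2]
  | succ t ih =>
    unfold Btw at h1 h2
    have hab : a ≠ b := by
      intro h
      subst h
      rw [SimpleGraph.dist_self] at h1
      omega
    -- the unique neighbour of a towards b
    obtain ⟨u, hu, hud⟩ := exists_dist_desc hconn (C := b) (x := a) hab
    -- neighbour towards z
    have haz : a ≠ z := by
      intro h; rw [← h, SimpleGraph.dist_self] at d1; omega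
    have haz' : a ≠ z' := by
      intro h; rw [← h, SimpleGraph.dist_self] at d2; omega
    obtain ⟨u1, hu1, hu1d⟩ := exists_dist_desc hconn (C := z) (x := a) haz
    obtain ⟨u2, hu2, hu2d⟩ := exists_dist_desc hconn (C := z') (x := a) haz'
    -- u1 = u and u2 = u
    have key : ∀ w w' : Cluster G s, (clusterGraph G s).Adj a w' →
        (clusterGraph G s).dist w w' + 1 = (clusterGraph G s).dist w a →
        Btw G s a w b → (clusterGraph G s).dist a w = t + 1 → w' = u := by
      intro w w' hadj hdesc hbtw hdist
      refine dist_desc_unique hconn (C := b) hadj hu ?_ hud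
      unfold Btw at hbtw
      have c1 : (clusterGraph G s).dist b w' = (clusterGraph G s).dist w' b :=
        SimpleGraph.dist_comm
      have c2 : (clusterGraph G s).dist b a = (clusterGraph G s).dist a b :=
        SimpleGraph.dist_comm
      have c3 : (clusterGraph G s).dist w a = (clusterGraph G s).dist a w :=
        SimpleGraph.dist_comm
      have c4 : (clusterGraph G s).dist w w' = (clusterGraph G s).dist w' w :=
        SimpleGraph.dist_comm
      have t1 := T.dist_triangle (u := w') (v := w) (w := b)
      have t2 := T.dist_triangle (u := b) (v := w') (w := a)
      have h1ad : (clusterGraph G s).dist w' a = 1 :=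
        SimpleGraph.dist_eq_one_iff_adj.mpr hadj.symm
      have t3 := T.dist_triangle (u := w) (v := a) (w := w')
      omega
    have e1 : u1 = u := key z u1 hu1 hu1d h1 d1
    have e2 : u2 = u := key z' u2 hu2 hu2d h2 d2
    rw [e1] at hu1d
    rw [e2] at hu2d
    -- now recurse from u
    have c3 : (clusterGraph G s).dist z a = (clusterGraph G s).dist a z :=
      SimpleGraph.dist_comm
    have c3' : (clusterGraph G s).dist z' a = (clusterGraph G s).dist a z' :=
      SimpleGraph.dist_comm
    have c4 : (clusterGraph G s).dist z u = (clusterGraph G s).dist u z :=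
      SimpleGraph.dist_comm
    have c4' : (clusterGraph G s).dist z' u = (clusterGraph G s).dist u z' :=
      SimpleGraph.dist_comm
    have c5 : (clusterGraph G s).dist b u = (clusterGraph G s).dist u b :=
      SimpleGraph.dist_comm
    have c6 : (clusterGraph G s).dist b a = (clusterGraph G s).dist a b :=
      SimpleGraph.dist_comm
    refine ih (a := u) ?_ ?_ ?_ ?_
    · unfold Btw
      omega
    · unfold Btw
      omega
    · omega
    · omega

lemma btw_order (hconn : G.Connected) {a b x y : Cluster G s}
    (hx : Btw G s a x b) (hy : Btw G s a y b)
    (hle : (clusterGraph G s).dist a x ≤ (clusterGraph G s).dist a y) :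
    Btw G s a x y ∧ Btw G s x y b := by
  have hxy : (clusterGraph G s).dist a y ≤ (clusterGraph G s).dist a b := by
    have := hy; unfold Btw at this; omega
  obtain ⟨z, hz1, hz2⟩ := exists_btw_at hconn (a := a) (b := y)
    (t := (clusterGraph G s).dist a x) (by omega)
  have hzb : Btw G s a z b := (btw_comp hconn hz2 hy).1
  have hzx : z = x := btw_unique hconn hzb hx hz1 rfl
  rw [hzx] at hz1 hz2
  exact ⟨hz2, (btw_comp hconn hz2 hy).2⟩




open SimpleGraph Walk

variable {V : Type} {G : SimpleGraph V} {s : V}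

lemma dist_meet_left (hconn : G.Connected) (x y : Cluster G s) :
    (clusterGraph G s).dist x (meet hconn x y) = (mw hconn x y).1 :=
  dist_anc_eq hconn x (mw_le hconn x y).1

lemma dist_meet_right (hconn : G.Connected) (x y : Cluster G s) :
    (clusterGraph G s).dist y (meet hconn x y) = (mw hconn x y).2 := by
  rw [meet, (mw_spec hconn x y).2]
  exact dist_anc_eq hconn y (mw_le hconn x y).2

lemma btw_meet (hconn : G.Connected) (x y : Cluster G s) :
    Btw G s x (meet hconn x y) y := by
  unfold Btw
  rw [dist_meet_left hconn x y,
    SimpleGraph.dist_comm (G := clusterGraph G s) (u := meet hconn x y) (v := y),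
    dist_meet_right hconn x y]
  exact (mw_spec hconn x y).1

lemma meet_dist_third (hconn : G.Connected) (a b c : Cluster G s)
    (h : (mw hconn a b).1 ≤ (mw hconn a c).1) :
    (clusterGraph G s).dist (meet hconn a b) c =
      ((mw hconn a c).1 - (mw hconn a b).1) + (mw hconn a c).2 := by
  have hub : (clusterGraph G s).dist (meet hconn a b) c ≤
      ((mw hconn a c).1 - (mw hconn a b).1) + (mw hconn a c).2 := by
    refine dist_le_witness hconn ?_
    show anc hconn (meet hconn a b) ((mw hconn a c).1 - (mw hconn a b).1) =
      anc hconn c (mw hconn a c).2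
    rw [meet, ← anc_add]
    have : (mw hconn a c).1 - (mw hconn a b).1 + (mw hconn a b).1 =
        (mw hconn a c).1 := by omega
    rw [this]
    exact (mw_spec hconn a c).2
  refine le_antisymm hub ?_
  obtain ⟨hsum, hw⟩ := mw_spec hconn (meet hconn a b) c
  have hwa : anc hconn a ((mw hconn (meet hconn a b) c).1 + (mw hconn a b).1) =
      anc hconn c (mw hconn (meet hconn a b) c).2 := by
    rw [anc_add, ← meet]
    exact hw
  have := witness_ge hconn a c hwa
  omega

lemma lev_meet_le (hconn : G.Connected) (a b c : Cluster G s)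
    (h2 : lev G s (meet hconn b c) ≤ lev G s (meet hconn a b)) :
    lev G s (meet hconn b c) ≤ lev G s (meet hconn a c) := by
  obtain ⟨hsumbc, hwbc⟩ := mw_spec hconn b c
  obtain ⟨hsumab, hwab⟩ := mw_spec hconn a b
  obtain ⟨hpb, hqb⟩ := mw_le hconn b c
  obtain ⟨hia, hja⟩ := mw_le hconn a b
  obtain ⟨hiac, hjac⟩ := mw_le hconn a c
  have lz : lev G s (meet hconn b c) = lev G s b - (mw hconn b c).1 :=
    lev_anc hconn b _
  have lab : lev G s (meet hconn a b) = lev G s b - (mw hconn a b).2 := by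
    rw [meet, hwab]; exact lev_anc hconn b _
  have lac : lev G s (meet hconn a c) = lev G s c - (mw hconn a c).2 := by
    rw [meet, (mw_spec hconn a c).2]; exact lev_anc hconn c _
  have lzc : lev G s (meet hconn b c) = lev G s c - (mw hconn b c).2 := by
    rw [meet, hwbc]; exact lev_anc hconn c _
  by_cases hp : (mw hconn b c).1 ≥ (mw hconn a b).2
  · -- meet b c is an ancestor of meet a b, hence a common ancestor of a and c
    have hanc : anc hconn a ((mw hconn b c).1 - (mw hconn a b).2 + (mw hconn a b).1) =
        anc hconn c (mw hconn b c).2 := by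
      rw [anc_add]
      have e1 : anc hconn a (mw hconn a b).1 = anc hconn b (mw hconn a b).2 := hwab
      rw [show anc hconn a (mw hconn a b).1 = anc hconn b (mw hconn a b).2 from hwab]
      rw [← anc_add]
      have : (mw hconn b c).1 - (mw hconn a b).2 + (mw hconn a b).2 =
          (mw hconn b c).1 := by omega
      rw [this]
      exact hwbc
    have := (witness_ge hconn a c hanc).2
    omega
  · omega

lemma median_of_meets (hconn : G.Connected) (a b c : Cluster G s)
    (h1 : lev G s (meet hconn a c) ≤ lev G s (meet hconn a b))
    (h2 : lev G s (meet hconn b c) ≤ lev G s (meet hconn a b)) :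
    Btw G s a (meet hconn a b) b ∧ Btw G s a (meet hconn a b) c ∧
      Btw G s b (meet hconn a b) c := by
  obtain ⟨hsumab, hwab⟩ := mw_spec hconn a b
  obtain ⟨hsumac, hwac⟩ := mw_spec hconn a c
  obtain ⟨hiab, hjab⟩ := mw_le hconn a b
  obtain ⟨hiac, hjac⟩ := mw_le hconn a c
  have lab : lev G s (meet hconn a b) = lev G s a - (mw hconn a b).1 :=
    lev_anc hconn a _
  have lac : lev G s (meet hconn a c) = lev G s a - (mw hconn a c).1 :=
    lev_anc hconn a _
  -- index comparison
  have hidx : (mw hconn a b).1 ≤ (mw hconn a c).1 := by omega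
  have hthird := meet_dist_third hconn a b c hidx
  refine ⟨btw_meet hconn a b, ?_, ?_⟩
  · unfold Btw
    rw [dist_meet_left hconn a b, hthird]
    omega
  · unfold Btw
    have hbm : (clusterGraph G s).dist b (meet hconn a b) = (mw hconn a b).2 :=
      dist_meet_right hconn a b
    rw [hbm, hthird]
    -- dist b c from levels
    have hlev := lev_add_lev hconn b c
    have hlevle := lev_meet_le hconn a b c h2
    have labb : lev G s (meet hconn a b) = lev G s b - (mw hconn a b).2 := by
      rw [meet, hwab]; exact lev_anc hconn b _
    have lacc : lev G s (meet hconn a c) = lev G s c - (mw hconn a c).2 := by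
      rw [meet, hwac]; exact lev_anc hconn c _
    -- upper bound for dist b c via explicit witness
    have hub : (clusterGraph G s).dist b c ≤
        ((mw hconn a c).1 - (mw hconn a b).1 + (mw hconn a b).2) + (mw hconn a c).2 := by
      refine dist_le_witness hconn ?_
      rw [anc_add]
      rw [show anc hconn b (mw hconn a b).2 = anc hconn a (mw hconn a b).1 from hwab.symm]
      rw [← anc_add]
      have : (mw hconn a c).1 - (mw hconn a b).1 + (mw hconn a b).1 =
          (mw hconn a c).1 := by omega
      rw [this]
      exact hwac
    omega

lemma exists_median (hconn : G.Connected) (a b c : Cluster G s) :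
    ∃ m, Btw G s a m b ∧ Btw G s a m c ∧ Btw G s b m c := by
  rcases le_total (lev G s (meet hconn a c)) (lev G s (meet hconn a b)) with hac | hac
  · rcases le_total (lev G s (meet hconn b c)) (lev G s (meet hconn a b)) with hbc | hbc
    · obtain ⟨p1, p2, p3⟩ := median_of_meets hconn a b c hac hbc
      exact ⟨meet hconn a b, p1, p2, p3⟩
    · obtain ⟨p1, p2, p3⟩ := median_of_meets hconn b c a
        (by rw [meet_comm hconn a b]; exact hbc)
        (by rw [meet_comm hconn a c]; exact hac.trans hbc)
      exact ⟨meet hconn b c, btw_symm p2, btw_symm p3, p1⟩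
  · rcases le_total (lev G s (meet hconn b c)) (lev G s (meet hconn a c)) with hbc | hbc
    · obtain ⟨p1, p2, p3⟩ := median_of_meets hconn a c b hac
        (by rw [meet_comm hconn b c]; exact hbc)
      exact ⟨meet hconn a c, p2, p1, btw_symm p3⟩
    · obtain ⟨p1, p2, p3⟩ := median_of_meets hconn b c a
        (by rw [meet_comm hconn a b]; exact hac.trans hbc)
        (by rw [meet_comm hconn a c]; exact hbc)
      exact ⟨meet hconn b c, btw_symm p2, btw_symm p3, p1⟩




open SimpleGraph Walk

variable {V : Type} {G : SimpleGraph V} {s : V}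

instance instFiniteCluster [Finite V] : Finite (Cluster G s) :=
  Quotient.finite _

lemma walk_support_in_set {S : Set (Cluster G s)} {u v : ↥S}
    (p : ((clusterGraph G s).induce S).Walk u v) :
    ∃ q : (clusterGraph G s).Walk u.1 v.1, ∀ x ∈ q.support, x ∈ S := by
  induction p with
  | nil =>
    refine ⟨Walk.nil, ?_⟩
    intro x hx
    simp only [Walk.support_nil, List.mem_singleton] at hx
    subst hx
    exact Subtype.coe_prop _
  | cons h p ih =>
    rename_i a b c
    obtain ⟨q, hq⟩ := ih
    have hadj : (clusterGraph G s).Adj a.1 b.1 := h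
    refine ⟨Walk.cons hadj q, ?_⟩
    intro x hx
    rw [Walk.support_cons] at hx
    rcases List.mem_cons.mp hx with rfl | hx
    · exact a.2
    · exact hq x hx

lemma subtree_walk {S : Set (Cluster G s)} (hS : IsSubtree G s S)
    {a b : Cluster G s} (ha : a ∈ S) (hb : b ∈ S) :
    ∃ q : (clusterGraph G s).Walk a b, ∀ x ∈ q.support, x ∈ S := by
  obtain ⟨p⟩ := hS.preconnected ⟨a, ha⟩ ⟨b, hb⟩
  exact walk_support_in_set p

open Classical in
noncomputable def dir (hconn : G.Connected) (z x : Cluster G s) : Cluster G s :=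
  if hx : z ≠ x then (exists_dist_desc hconn (C := x) hx).choose else z

lemma dir_spec (hconn : G.Connected) {z x : Cluster G s} (hx : z ≠ x) :
    (clusterGraph G s).Adj z (dir hconn z x) ∧
      (clusterGraph G s).dist x (dir hconn z x) + 1 = (clusterGraph G s).dist x z := by
  rw [dir, dif_pos hx]
  exact (exists_dist_desc hconn (C := x) hx).choose_spec

lemma dir_unique (hconn : G.Connected) {z x w : Cluster G s} (hx : z ≠ x)
    (hadj : (clusterGraph G s).Adj z w)
    (hdesc : (clusterGraph G s).dist x w + 1 = (clusterGraph G s).dist x z) :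
    dir hconn z x = w := by
  obtain ⟨h1, h2⟩ := dir_spec hconn hx
  exact dist_desc_unique hconn (C := x) h1 hadj h2 hdesc

lemma dir_congr_half (hconn : G.Connected) {z x y : Cluster G s}
    (hadj : (clusterGraph G s).Adj x y) (hx : x ≠ z) (hy : y ≠ z)
    (hcase : (clusterGraph G s).dist z y = (clusterGraph G s).dist z x + 1) :
    dir hconn z y = dir hconn z x := by
  have T : (clusterGraph G s).Connected := clusterGraph_connected hconn
  obtain ⟨h1, h2⟩ := dir_spec hconn (Ne.symm hx)
  refine dir_unique hconn (Ne.symm hy) h1 ?_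
  set w := dir hconn z x with hw
  have c1 : (clusterGraph G s).dist z x = (clusterGraph G s).dist x z :=
    SimpleGraph.dist_comm
  have c2 : (clusterGraph G s).dist z y = (clusterGraph G s).dist y z :=
    SimpleGraph.dist_comm
  have c3 : (clusterGraph G s).dist x y = 1 := SimpleGraph.dist_eq_one_iff_adj.mpr hadj
  have c4 : (clusterGraph G s).dist z w = 1 := SimpleGraph.dist_eq_one_iff_adj.mpr h1
  have t1 := T.dist_triangle (u := y) (v := x) (w := w)
  have t2 := T.dist_triangle (u := y) (v := w) (w := z)
  have c8 : (clusterGraph G s).dist w z = (clusterGraph G s).dist z w :=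
    SimpleGraph.dist_comm
  have c9 : (clusterGraph G s).dist x w = (clusterGraph G s).dist w x :=
    SimpleGraph.dist_comm
  have c5 : (clusterGraph G s).dist y x = (clusterGraph G s).dist x y :=
    SimpleGraph.dist_comm
  have c6 : (clusterGraph G s).dist y z = (clusterGraph G s).dist z y :=
    SimpleGraph.dist_comm
  have c7 : (clusterGraph G s).dist w y = (clusterGraph G s).dist y w :=
    SimpleGraph.dist_comm
  omega

lemma dir_congr (hconn : G.Connected) {z x y : Cluster G s}
    (hadj : (clusterGraph G s).Adj x y) (hx : x ≠ z) (hy : y ≠ z) :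
    dir hconn z x = dir hconn z y := by
  rcases adj_dist_cases hconn (C := z) hadj with h | h
  · exact dir_congr_half hconn hadj.symm hy hx (by omega)
  · exact (dir_congr_half hconn hadj hx hy (by omega)).symm

lemma dir_walk_congr (hconn : G.Connected) {S : Set (Cluster G s)}
    {z : Cluster G s} (hzS : z ∉ S) :
    ∀ {x y : Cluster G s} (q : (clusterGraph G s).Walk x y),
      (∀ u ∈ q.support, u ∈ S) → dir hconn z x = dir hconn z y := by
  intro x y q
  induction q with
  | nil => intro _; rfl
  | cons h q ih =>
    rename_i c d e
    intro hsup
    have hc : c ∈ S := hsup c (by rw [Walk.support_cons]; exact List.mem_cons_self)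
    have hd : d ∈ S := by
      refine hsup d ?_
      rw [Walk.support_cons]
      exact List.mem_cons_of_mem _ (Walk.start_mem_support q)
    have hcz : c ≠ z := fun hh => hzS (hh ▸ hc)
    have hdz : d ≠ z := fun hh => hzS (hh ▸ hd)
    have e1 := dir_congr hconn h hcz hdz
    have e2 := ih (fun u hu => hsup u (by rw [Walk.support_cons]; exact List.mem_cons_of_mem _ hu))
    rw [e1, e2]

lemma btw_mem_subtree (hconn : G.Connected) {S : Set (Cluster G s)}
    (hS : IsSubtree G s S) {a b z : Cluster G s} (ha : a ∈ S) (hb : b ∈ S)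
    (hbtw : Btw G s a z b) : z ∈ S := by
  by_cases hza : z = a
  · rwa [hza]
  by_cases hzb : z = b
  · rwa [hzb]
  by_contra hzS
  obtain ⟨p, hp⟩ := subtree_walk hS ha hb
  have hdir := dir_walk_congr hconn hzS p hp
  -- contradiction
  obtain ⟨-, ha2⟩ := dir_spec hconn (z := z) (x := a) (Ne.symm fun hh => hza hh.symm)
  obtain ⟨-, hb2⟩ := dir_spec hconn (z := z) (x := b) (Ne.symm fun hh => hzb hh.symm)
  set w := dir hconn z a with hwdef
  rw [← hdir] at hb2
  have T : (clusterGraph G s).Connected := clusterGraph_connected hconn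
  unfold Btw at hbtw
  have t1 := T.dist_triangle (u := a) (v := w) (w := b)
  have c1 : (clusterGraph G s).dist w b = (clusterGraph G s).dist b w :=
    SimpleGraph.dist_comm
  have c2 : (clusterGraph G s).dist z b = (clusterGraph G s).dist b z :=
    SimpleGraph.dist_comm
  omega

lemma isSubtree_diff_singleton (hconn : G.Connected) [Finite V]
    {S : Set (Cluster G s)} (hS : IsSubtree G s S) {v : Cluster G s} (hv : v ∈ S)
    (hdeg : clusterDegree G s S v ≤ 1) (hex : ∃ w ∈ S, w ≠ v) :
    IsSubtree G s (S \ {v}) := by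
  have T : (clusterGraph G s).Connected := clusterGraph_connected hconn
  rw [IsSubtree, SimpleGraph.connected_iff]
  obtain ⟨w0, hw0, hw0v⟩ := hex
  refine ⟨?_, ⟨⟨w0, hw0, hw0v⟩⟩⟩
  have main : ∀ n (a b : Cluster G s) (ha : a ∈ S) (hav : a ≠ v) (hb : b ∈ S)
      (hbv : b ≠ v), (clusterGraph G s).dist a b = n →
      ((clusterGraph G s).induce (S \ {v})).Reachable ⟨a, ⟨ha, hav⟩⟩ ⟨b, ⟨hb, hbv⟩⟩ := by
    intro n
    induction n using Nat.strong_induction_on with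
    | _ n ih =>
      intro a b ha hav hb hbv hd
      rcases Nat.eq_zero_or_pos n with rfl | hn
      · have : a = b := T.dist_eq_zero_iff.mp hd
        subst this
        rfl
      · obtain ⟨z, hz1, hz2⟩ := exists_btw_at hconn (a := a) (b := b) (t := 1) (by omega)
        have hzS : z ∈ S := btw_mem_subtree hconn hS ha hb hz2
        have hadj : (clusterGraph G s).Adj a z := SimpleGraph.dist_eq_one_iff_adj.mp hz1
        have hzv : z ≠ v := by
          intro hzeq
          subst hzeq
          unfold Btw at hz2
          by_cases hzb : z = b
          · exact hbv hzb.symm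
          · have hzbpos : 0 < (clusterGraph G s).dist z b := T.pos_dist_of_ne hzb
            obtain ⟨z2, hz21, hz22⟩ := exists_btw_at hconn (a := z) (b := b) (t := 1) (by omega)
            have hz2S : z2 ∈ S := btw_mem_subtree hconn hS hzS hb hz22
            have hadj2 : (clusterGraph G s).Adj z z2 := SimpleGraph.dist_eq_one_iff_adj.mp hz21
            have hz2a : z2 ≠ a := by
              intro hh
              subst hh
              unfold Btw at hz22
              have c1 : (clusterGraph G s).dist z z2 = (clusterGraph G s).dist z2 z :=
                SimpleGraph.dist_comm
              omega
            have hsub : {a, z2} ⊆ {C' : Cluster G s | C' ∈ S ∧ (clusterGraph G s).Adj z C'} := by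
              intro u hu
              rcases hu with rfl | hu
              · exact ⟨ha, hadj.symm⟩
              · rcases hu with rfl
                exact ⟨hz2S, hadj2⟩
            have hcard : 1 < ({C' : Cluster G s | C' ∈ S ∧ (clusterGraph G s).Adj z C'}).ncard := by
              have h2 : ({a, z2} : Set (Cluster G s)).ncard = 2 :=
                Set.ncard_pair (Ne.symm hz2a)
              have := Set.ncard_le_ncard hsub (Set.toFinite _)
              omega
            unfold clusterDegree at hdeg
            omega
        have hstep : ((clusterGraph G s).induce (S \ {v})).Adj
            ⟨a, ⟨ha, hav⟩⟩ ⟨z, ⟨hzS, hzv⟩⟩ := hadj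
        refine hstep.reachable.trans ?_
        unfold Btw at hz2
        exact ih (n - 1) (by omega) z b hzS hzv hb hbv (by omega)
  intro x y
  obtain ⟨a, ⟨haS, hav⟩⟩ := x
  obtain ⟨b, ⟨hbS, hbv⟩⟩ := y
  exact main _ a b haS hav hbS hbv rfl




open SimpleGraph Walk

variable {V : Type} {G : SimpleGraph V} {s : V}

lemma gate_btw (hconn : G.Connected) {S : Set (Cluster G s)} (hS : IsSubtree G s S)
    {CC L : Cluster G s} (hL : L ∈ S)
    (hmin : ∀ w ∈ S, w ≠ L → (clusterGraph G s).dist CC L < (clusterGraph G s).dist CC w) :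
    ∀ w ∈ S, Btw G s CC L w := by
  have T : (clusterGraph G s).Connected := clusterGraph_connected hconn
  suffices h : ∀ n, ∀ w ∈ S, (clusterGraph G s).dist L w = n → Btw G s CC L w by
    intro w hw
    exact h _ w hw rfl
  intro n
  induction n using Nat.strong_induction_on with
  | _ n ih =>
    intro w hw hd
    by_cases hwL : w = L
    · subst hwL
      exact btw_right CC w
    obtain ⟨m, m1, m2, m3⟩ := exists_median hconn CC L w
    by_cases hmL : m = L
    · rw [hmL] at m2
      exact m2
    by_cases hmw : m = w
    · exfalso
      rw [hmw] at m1
      unfold Btw at m1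
      have := hmin w hw hwL
      have hpos : 0 < (clusterGraph G s).dist w L := T.pos_dist_of_ne hwL
      omega
    have hmS : m ∈ S := btw_mem_subtree hconn hS hL hw m3
    have hlt : (clusterGraph G s).dist L m < n := by
      unfold Btw at m3
      have hpos : 0 < (clusterGraph G s).dist m w := T.pos_dist_of_ne hmw
      omega
    have hCLm : Btw G s CC L m := ih _ hlt m hmS rfl
    have := btw_comp hconn (a := CC) (b := L) (c := m) (d := w) hCLm (by
      -- Btw CC m w is m2
      exact m2)
    exact this.1

lemma btw_chain (hconn : G.Connected) {a b c d : Cluster G s}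
    (h1 : Btw G s a b c) (h2 : Btw G s b c d) (hbc : b ≠ c) :
    Btw G s a c d ∧ Btw G s a b d := by
  have T : (clusterGraph G s).Connected := clusterGraph_connected hconn
  obtain ⟨m, m1, m2, m3⟩ := exists_median hconn a c d
  -- b and m both between a and c
  rcases le_total ((clusterGraph G s).dist a m) ((clusterGraph G s).dist a b) with hle | hle
  · -- forces b = c, contradiction
    obtain ⟨o1, o2⟩ := btw_order hconn (a := a) (b := c) m1 h1 hle
    exfalso
    unfold Btw at o1 o2 h2 m3
    have t1 := T.dist_triangle (u := b) (v := m) (w := d)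
    have hpos : 0 < (clusterGraph G s).dist b c := T.pos_dist_of_ne hbc
    have c1 : (clusterGraph G s).dist m b = (clusterGraph G s).dist b m :=
      SimpleGraph.dist_comm
    have c2 : (clusterGraph G s).dist c m = (clusterGraph G s).dist m c :=
      SimpleGraph.dist_comm
    omega
  · obtain ⟨o1, o2⟩ := btw_order hconn (a := a) (b := c) h1 m1 hle
    -- o1 : Btw a b m, o2 : Btw b m c
    have hmc : m = c := by
      have hd0 : (clusterGraph G s).dist m c = 0 := by
        unfold Btw at o2 h2 m3
        have t1 := T.dist_triangle (u := b) (v := m) (w := d)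
        have c1 : (clusterGraph G s).dist c m = (clusterGraph G s).dist m c :=
          SimpleGraph.dist_comm
        omega
      exact (T.dist_eq_zero_iff.mp hd0)
    rw [hmc] at m2
    refine ⟨m2, ?_⟩
    unfold Btw at h1 h2 m2 ⊢
    have t1 := T.dist_triangle (u := a) (v := b) (w := d)
    have t2 := T.dist_triangle (u := b) (v := c) (w := d)
    omega

lemma keyA (hconn : G.Connected) {S : Set (Cluster G s)} (hS : IsSubtree G s S)
    {e CC u : Cluster G s} {rad dd : ℕ} (he : e ∈ S) (hdd : 1 ≤ dd)
    (h1 : (clusterGraph G s).dist CC e = rad + dd)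
    (h2 : ∀ w ∈ S, w ≠ e → rad + dd < (clusterGraph G s).dist CC w)
    (hu : (clusterGraph G s).dist CC u ≤ rad) :
    ∀ w ∈ S, Btw G s u e w := by
  have T : (clusterGraph G s).Connected := clusterGraph_connected hconn
  have hmin : ∀ w ∈ S, w ≠ e → (clusterGraph G s).dist CC e < (clusterGraph G s).dist CC w :=
    fun w hw hne => by have := h2 w hw hne; omega
  have hgate : ∀ w ∈ S, Btw G s CC e w := gate_btw hconn hS he hmin
  intro w hw
  obtain ⟨n, n1, n2, n3⟩ := exists_median hconn u e w
  have hnS : n ∈ S := btw_mem_subtree hconn hS he hw n3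
  by_cases hne : n = e
  · rw [hne] at n2
    exact n2
  exfalso
  have hCn := h2 n hnS hne
  have hgn : Btw G s CC e n := hgate n hnS
  obtain ⟨m, m1, m2, m3⟩ := exists_median hconn CC e u
  -- both m and n between e and u
  have hem : Btw G s e m u := m3
  have hen : Btw G s e n u := btw_symm n1
  rcases le_total ((clusterGraph G s).dist e n) ((clusterGraph G s).dist e m) with hle | hle
  · obtain ⟨o1, o2⟩ := btw_order hconn (a := e) (b := u) hen hem hle
    -- o1 : Btw e n m
    have henC := btw_comp hconn (a := e) (b := n) (c := m) (d := CC) o1 (btw_symm m1)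
    -- henC.1 : Btw e n CC
    have := btw_symm henC.1
    unfold Btw at this
    omega
  · obtain ⟨o1, o2⟩ := btw_order hconn (a := e) (b := u) hem hen hle
    -- o2 : Btw m n u
    unfold Btw at o1 o2 m1 m2 hgn
    have t1 := T.dist_triangle (u := CC) (v := u) (w := n)
    have c1 : (clusterGraph G s).dist u n = (clusterGraph G s).dist n u :=
      SimpleGraph.dist_comm
    have c2 : (clusterGraph G s).dist m e = (clusterGraph G s).dist e m :=
      SimpleGraph.dist_comm
    have c3 : (clusterGraph G s).dist e n = (clusterGraph G s).dist n e :=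
      SimpleGraph.dist_comm
    have hpos : 0 < (clusterGraph G s).dist e n := T.pos_dist_of_ne (Ne.symm hne)
    omega

lemma keyB (hconn : G.Connected) {e CC u : Cluster G s} {rad dd : ℕ}
    (h1 : (clusterGraph G s).dist CC e = rad + dd)
    (hu : (clusterGraph G s).dist CC u ≤ rad) {j : ℕ} (hj : j ≤ dd) :
    ∃ z, (clusterGraph G s).dist e z = j ∧ Btw G s e z u ∧ Btw G s CC z e := by
  obtain ⟨m, m1, m2, m3⟩ := exists_median hconn CC e u
  -- dist e m ≥ dd
  have hme : (clusterGraph G s).dist e m ≥ dd := by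
    unfold Btw at m1 m2
    have c1 : (clusterGraph G s).dist m e = (clusterGraph G s).dist e m :=
      SimpleGraph.dist_comm
    omega
  obtain ⟨z, hz1, hz2⟩ := exists_btw_at hconn (a := e) (b := m) (by omega : j ≤ _)
  refine ⟨z, hz1, ?_, ?_⟩
  · exact (btw_comp hconn (a := e) (b := z) (c := m) (d := u) hz2 m3).1
  · have := (btw_comp hconn (a := e) (b := z) (c := m) (d := CC) hz2 (btw_symm m1)).1
    exact btw_symm this

lemma dist_lt_card [Finite V] (hconn : G.Connected) (x y : Cluster G s) :
    (clusterGraph G s).dist x y < Nat.card (Cluster G s) := by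
  have T : (clusterGraph G s).Connected := clusterGraph_connected hconn
  obtain ⟨p, hp⟩ := T.exists_walk_length_eq_dist x y
  have hpath : p.IsPath := p.isPath_of_length_eq_dist hp
  have : Fintype (Cluster G s) := Fintype.ofFinite _
  have := hpath.length_lt
  rw [hp] at this
  rwa [Nat.card_eq_fintype_card]

lemma ext_endpoint [Finite V] (hconn : G.Connected) {S : Set (Cluster G s)}
    (hS : IsSubtree G s S) :
    ∀ x ∈ S, ∀ y ∈ S, x ≠ y →
      ∃ e, (e ∈ S ∧ clusterDegree G s S e ≤ 1) ∧ Btw G s x y e := by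
  have T : (clusterGraph G s).Connected := clusterGraph_connected hconn
  suffices h : ∀ n x y, x ∈ S → y ∈ S → x ≠ y →
      Nat.card (Cluster G s) - (clusterGraph G s).dist x y = n →
      ∃ e, (e ∈ S ∧ clusterDegree G s S e ≤ 1) ∧ Btw G s x y e by
    intro x hx y hy hxy
    exact h _ x y hx hy hxy rfl
  intro n
  induction n using Nat.strong_induction_on with
  | _ n ih =>
    intro x y hx hy hxy hn
    by_cases hyE : clusterDegree G s S y ≤ 1
    · exact ⟨y, ⟨hy, hyE⟩, btw_right x y⟩
    · push_neg at hyE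
      -- y has at least two neighbours in S
      obtain ⟨p, hp1, hp2⟩ := exists_dist_desc hconn (C := x) (x := y) (Ne.symm hxy)
      obtain ⟨a, b, ha, hb, hab⟩ := (Set.one_lt_ncard_iff (Set.toFinite _)).mp hyE
      obtain ⟨haS, haAdj⟩ := ha
      obtain ⟨hbS, hbAdj⟩ := hb
      have hz : ∃ z, z ∈ S ∧ (clusterGraph G s).Adj y z ∧ z ≠ p := by
        by_cases hap : a = p
        · exact ⟨b, hbS, hbAdj, fun hh => hab (by rw [hap, hh])⟩
        · exact ⟨a, haS, haAdj, hap⟩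
      obtain ⟨z, hzS, hzAdj, hzp⟩ := hz
      have hdz : (clusterGraph G s).dist x z = (clusterGraph G s).dist x y + 1 := by
        rcases adj_dist_cases hconn (C := x) hzAdj with hc | hc
        · exfalso
          exact hzp (dist_desc_unique hconn (C := x) hzAdj hp1 hc hp2)
        · omega
      have hbtwz : Btw G s x y z := by
        unfold Btw
        have : (clusterGraph G s).dist y z = 1 := SimpleGraph.dist_eq_one_iff_adj.mpr hzAdj
        omega
      have hxz : x ≠ z := by
        intro hh
        rw [← hh] at hdz
        rw [SimpleGraph.dist_self] at hdz
        omega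
      have hcard := dist_lt_card hconn x z
      obtain ⟨e, heE, heB⟩ := ih (Nat.card (Cluster G s) - (clusterGraph G s).dist x z)
        (by omega) x z hx hzS hxz rfl
      refine ⟨e, heE, ?_⟩
      exact (btw_comp hconn (a := x) (b := y) (c := z) (d := e) hbtwz heB).1




open SimpleGraph Walk

variable {V : Type} {G : SimpleGraph V} {s : V}

lemma exists_nbr (hconn : G.Connected) {S : Set (Cluster G s)} (hS : IsSubtree G s S)
    {e : Cluster G s} (he : e ∈ S) (hex : ∃ w ∈ S, w ≠ e) :
    ∃ w, w ∈ S ∧ (clusterGraph G s).Adj e w := by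
  have T : (clusterGraph G s).Connected := clusterGraph_connected hconn
  obtain ⟨w, hw, hwe⟩ := hex
  have hpos : 0 < (clusterGraph G s).dist e w := T.pos_dist_of_ne (Ne.symm hwe)
  obtain ⟨z, hz1, hz2⟩ := exists_btw_at hconn (a := e) (b := w) (t := 1) (by omega)
  exact ⟨z, btw_mem_subtree hconn hS he hw hz2, SimpleGraph.dist_eq_one_iff_adj.mp hz1⟩

lemma key_pkg (hconn : G.Connected) [Finite V] {r : V → ℕ} {δ : ℕ}
    {Tδ : Set (Cluster G s)} (hTδ : IsMinDomSubtree G s r δ Tδ)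
    {e : Cluster G s} (he : e ∈ Tδ) (hdeg : clusterDegree G s Tδ e ≤ 1)
    (hex : ∃ w ∈ Tδ, w ≠ e) :
    ∃ CC, (clusterGraph G s).dist CC e = clusterRadius G s r CC + δ ∧
      ∀ w ∈ Tδ, w ≠ e →
        clusterRadius G s r CC + δ < (clusterGraph G s).dist CC w := by
  obtain ⟨⟨hsub, hdom⟩, hmin⟩ := hTδ
  have hS' : IsSubtree G s (Tδ \ {e}) :=
    isSubtree_diff_singleton hconn hsub he hdeg hex
  have hnotdom : ¬ (∀ C : Cluster G s, ∃ C' ∈ Tδ \ {e},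
      (clusterGraph G s).dist C C' ≤ clusterRadius G s r C + δ) := by
    intro hdom'
    have hDS : IsDomSubtree G s r δ (Tδ \ {e}) := ⟨hS', hdom'⟩
    have hle := hmin _ hDS
    have hlt : (Tδ \ {e}).ncard < Tδ.ncard :=
      Set.ncard_diff_singleton_lt_of_mem he (Set.toFinite _)
    omega
  push_neg at hnotdom
  obtain ⟨CC, hCC⟩ := hnotdom
  obtain ⟨C', hC', hC'le⟩ := hdom CC
  have hC'e : C' = e := by
    by_contra hne
    have := hCC C' ⟨hC', fun hh => hne hh⟩
    omega
  rw [hC'e] at hC'le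
  obtain ⟨w, hwS, hwadj⟩ := exists_nbr hconn hsub he hex
  have hwne : w ≠ e := hwadj.ne'
  have hwlt := hCC w ⟨hwS, fun hh => hwne hh⟩
  have hcases := adj_dist_cases hconn (C := CC) hwadj
  refine ⟨CC, by omega, fun w' hw' hne' => hCC w' ⟨hw', fun hh => hne' hh⟩⟩

theorem main_count [Finite V] (hconn : G.Connected)
    (r : V → ℕ) (δ : ℕ) (Tr Tδ : Set (Cluster G s))
    (hTr : IsMinDomSubtree G s r 0 Tr)
    (hTδ : IsMinDomSubtree G s r δ Tδ)
    (R : Cluster G s) :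
    Tδ.ncard + δ * (numLeaves G s Tδ R) ≤ Tr.ncard := by
  classical
  have T : (clusterGraph G s).Connected := clusterGraph_connected hconn
  have hNE : Nonempty (Cluster G s) := ⟨root G s⟩
  set Lv := {C : Cluster G s | C ∈ Tδ ∧ C ≠ R ∧ clusterDegree G s Tδ C = 1} with hLvdef
  have hnum : numLeaves G s Tδ R = Lv.ncard := rfl
  have hTrdom : IsDomSubtree G s r δ Tr := by
    refine ⟨hTr.1.1, fun C => ?_⟩
    obtain ⟨C', h1, h2⟩ := hTr.1.2 C
    exact ⟨C', h1, by omega⟩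
  have easy : Tδ.ncard ≤ Tr.ncard := hTδ.2 Tr hTrdom
  rw [hnum]
  by_cases hdeg0 : δ = 0 ∨ Lv.ncard = 0
  · rcases hdeg0 with rfl | h0
    · simpa using easy
    · rw [h0]; simpa using easy
  push_neg at hdeg0
  obtain ⟨hδ, hk⟩ := hdeg0
  have hδ1 : 1 ≤ δ := by omega
  set E := {C : Cluster G s | C ∈ Tδ ∧ clusterDegree G s Tδ C ≤ 1} with hEdef
  have hLvE : Lv ⊆ E := fun C hC => ⟨hC.1, le_of_eq hC.2.2⟩
  obtain ⟨L0, hL0⟩ : Lv.Nonempty := Set.nonempty_of_ncard_ne_zero hk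
  have hL0Tδ : L0 ∈ Tδ := hL0.1
  -- two points
  have hnbr0 : ∃ w ∈ Tδ, w ≠ L0 := by
    have h1 : ({C' : Cluster G s | C' ∈ Tδ ∧ (clusterGraph G s).Adj L0 C'}).Nonempty := by
      apply Set.nonempty_of_ncard_ne_zero
      have := hL0.2.2
      unfold clusterDegree at this
      omega
    obtain ⟨w, hwS, hwadj⟩ := h1
    exact ⟨w, hwS, hwadj.ne'⟩
  have hex : ∀ e ∈ Tδ, ∃ w ∈ Tδ, w ≠ e := by
    intro e heS
    by_cases h : e = L0
    · subst h
      exact hnbr0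
    · exact ⟨L0, hL0Tδ, fun hh => h hh.symm⟩
  -- witnesses
  have hwit : ∀ e ∈ E, ∃ CC, (clusterGraph G s).dist CC e = clusterRadius G s r CC + δ ∧
      ∀ w ∈ Tδ, w ≠ e →
        clusterRadius G s r CC + δ < (clusterGraph G s).dist CC w :=
    fun e he => key_pkg hconn hTδ he.1 he.2 (hex e he.1)
  choose! CW hCW1 hCW2 using hwit
  have hu : ∀ C : Cluster G s, ∃ u ∈ Tr,
      (clusterGraph G s).dist C u ≤ clusterRadius G s r C := by
    intro C
    obtain ⟨C', h1, h2⟩ := hTr.1.2 C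
    exact ⟨C', h1, by omega⟩
  choose U hU1 hU2 using hu
  -- key A
  have hKA : ∀ e ∈ E, ∀ w ∈ Tδ, Btw G s (U (CW e)) e w := by
    intro e he w hw
    exact keyA hconn hTδ.1.1 he.1 hδ1 (hCW1 e he) (hCW2 e he) (hU2 (CW e)) w hw
  -- gate
  have hgate : ∀ e ∈ E, ∀ w ∈ Tδ, Btw G s (CW e) e w := by
    intro e he
    refine gate_btw hconn hTδ.1.1 he.1 ?_
    intro w hw hne
    have := hCW2 e he w hw hne
    have := hCW1 e he
    omega
  -- q points
  have hq : ∀ e ∈ E, ∀ j : Fin δ, ∃ z, (clusterGraph G s).dist e z = (j : ℕ) + 1 ∧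
      Btw G s e z (U (CW e)) ∧ Btw G s (CW e) z e := by
    intro e he j
    exact keyB hconn (hCW1 e he) (hU2 (CW e)) (by omega : (j : ℕ) + 1 ≤ δ)
  choose! Q hQ1 hQ2 hQ3 using hq
  have hQne : ∀ e ∈ E, ∀ j : Fin δ, Q e j ≠ e := by
    intro e he j hh
    have := hQ1 e he j
    rw [hh, SimpleGraph.dist_self] at this
    omega
  have hQnot : ∀ e ∈ E, ∀ j : Fin δ, Q e j ∉ Tδ := by
    intro e he j hmem
    have h3 := hQ3 e he j
    unfold Btw at h3
    have h1 := hQ1 e he j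
    have hc : (clusterGraph G s).dist (Q e j) e = (clusterGraph G s).dist e (Q e j) :=
      SimpleGraph.dist_comm
    have hlt := hCW2 e he (Q e j) hmem (hQne e he j)
    have := hCW1 e he
    omega
  have hQE : ∀ e ∈ E, ∀ j : Fin δ, ∀ w ∈ Tδ, Btw G s (Q e j) e w := by
    intro e he j w hw
    exact (btw_comp hconn (a := CW e) (b := Q e j) (c := e) (d := w)
      (hQ3 e he j) (hgate e he w hw)).2
  -- pairs in E
  have hEpair : ∀ e ∈ E, ∃ e', e' ∈ E ∧ e' ≠ e := by
    intro e he
    obtain ⟨w, hw, hwe⟩ := hex e he.1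
    obtain ⟨e', he'E, he'B⟩ := ext_endpoint hconn hTδ.1.1 e he.1 w hw (Ne.symm hwe)
    refine ⟨e', he'E, ?_⟩
    intro hh
    unfold Btw at he'B
    have hpos : 0 < (clusterGraph G s).dist e w := T.pos_dist_of_ne (Ne.symm hwe)
    rw [hh] at he'B
    have hpos2 : 0 < (clusterGraph G s).dist w e := T.pos_dist_of_ne hwe
    rw [SimpleGraph.dist_self] at he'B
    omega
  -- Tδ ⊆ Tr
  have hTδTr : ∀ x ∈ Tδ, x ∈ Tr := by
    intro x hx
    by_cases hxE : x ∈ E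
    · obtain ⟨e', he', hne⟩ := hEpair x hxE
      have b1 : Btw G s (U (CW x)) x e' := hKA x hxE e' he'.1
      have b2 : Btw G s x e' (U (CW e')) := btw_symm (hKA e' he' x hx)
      have hch := btw_chain hconn b1 b2 (Ne.symm hne)
      exact btw_mem_subtree hconn hTr.1.1 (hU1 _) (hU1 _) hch.2
    · have hxdeg : 1 < clusterDegree G s Tδ x := by
        by_contra hc
        exact hxE ⟨hx, by omega⟩
      unfold clusterDegree at hxdeg
      obtain ⟨y1, y2, hy1, hy2, hy12⟩ :=
        (Set.one_lt_ncard_iff (Set.toFinite _)).mp hxdeg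
      obtain ⟨hy1S, hy1adj⟩ := hy1
      obtain ⟨hy2S, hy2adj⟩ := hy2
      have hd1 : (clusterGraph G s).dist x y1 = 1 :=
        SimpleGraph.dist_eq_one_iff_adj.mpr hy1adj
      have hd2 : (clusterGraph G s).dist x y2 = 1 :=
        SimpleGraph.dist_eq_one_iff_adj.mpr hy2adj
      obtain ⟨e1, he1E, he1B⟩ := ext_endpoint hconn hTδ.1.1 x hx y1 hy1S hy1adj.ne
      obtain ⟨e2, he2E, he2B⟩ := ext_endpoint hconn hTδ.1.1 x hx y2 hy2S hy2adj.ne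
      -- Btw e1 x e2
      have hmid : Btw G s e1 x e2 := by
        obtain ⟨m, m1, m2, m3⟩ := exists_median hconn e1 x e2
        by_cases hmx : m = x
        · rwa [hmx] at m2
        · exfalso
          have hpos : 0 < (clusterGraph G s).dist x m := T.pos_dist_of_ne (fun hh => hmx hh.symm)
          obtain ⟨z, hz1, hz2⟩ := exists_btw_at hconn (a := x) (b := m) (t := 1) (by omega)
          have bz1 : Btw G s x z e1 :=
            (btw_comp hconn (a := x) (b := z) (c := m) (d := e1) hz2 (btw_symm m1)).1
          have bz2 : Btw G s x z e2 :=
            (btw_comp hconn (a := x) (b := z) (c := m) (d := e2) hz2 m3).1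
          have hzy1 : z = y1 := btw_unique hconn bz1 he1B hz1 hd1
          have hzy2 : z = y2 := btw_unique hconn bz2 he2B hz1 hd2
          exact hy12 (hzy1 ▸ hzy2 ▸ rfl)
      have hxe1 : e1 ≠ x := fun hh => hxE (hh ▸ he1E)
      have hxe2 : x ≠ e2 := fun hh => hxE (hh ▸ he2E)
      have c1 : Btw G s (U (CW e1)) e1 x := hKA e1 he1E x hx
      have ch1 := btw_chain hconn c1 hmid hxe1
      have c3 : Btw G s x e2 (U (CW e2)) := btw_symm (hKA e2 he2E x hx)
      have ch2 := btw_chain hconn ch1.1 c3 hxe2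
      exact btw_mem_subtree hconn hTr.1.1 (hU1 _) (hU1 _) ch2.2
  -- Q points in Tr
  have hQTr : ∀ e ∈ E, ∀ j : Fin δ, Q e j ∈ Tr := by
    intro e he j
    obtain ⟨e', he', hne⟩ := hEpair e he
    have b1 : Btw G s (U (CW e)) (Q e j) e := btw_symm (hQ2 e he j)
    have b2 : Btw G s (Q e j) e e' := hQE e he j e' he'.1
    have ch1 := btw_chain hconn b1 b2 (hQne e he j)
    have b4 : Btw G s e e' (U (CW e')) := btw_symm (hKA e' he' e he.1)
    have b3 := btw_chain hconn b2 b4 (Ne.symm hne)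
    have hQe' : Q e j ≠ e' := fun hh => (hQnot e he j) (hh ▸ he'.1)
    have ch2 := btw_chain hconn ch1.2 b3.1 hQe'
    exact btw_mem_subtree hconn hTr.1.1 (hU1 _) (hU1 _) ch2.2
  -- counting
  set f : ↥Lv × Fin δ → Cluster G s := fun p => Q p.1.1 p.2 with hfdef
  have hfinj : Function.Injective f := by
    rintro ⟨⟨e, heLv⟩, j⟩ ⟨⟨e', he'Lv⟩, j'⟩ hEq
    simp only [hfdef] at hEq
    have heE : e ∈ E := hLvE heLv
    have he'E : e' ∈ E := hLvE he'Lv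
    by_cases hee : e = e'
    · subst hee
      have h1 := hQ1 e heE j
      have h2 := hQ1 e heE j'
      rw [hEq] at h1
      rw [h2] at h1
      have : j = j' := Fin.ext (by omega)
      subst this
      rfl
    · exfalso
      have b1 := hQE e heE j e' he'E.1
      have b2 := hQE e' he'E j' e heE.1
      rw [hEq] at b1
      unfold Btw at b1 b2
      have hpos : 0 < (clusterGraph G s).dist e e' := T.pos_dist_of_ne hee
      have hpos2 : 0 < (clusterGraph G s).dist e' e := T.pos_dist_of_ne (Ne.symm hee)
      have h1 := hQ1 e heE j
      have h2 := hQ1 e' he'E j'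
      rw [hEq] at h1
      have hc1 : (clusterGraph G s).dist e (Q e' j') =
          (clusterGraph G s).dist (Q e' j') e := SimpleGraph.dist_comm
      have hc2 : (clusterGraph G s).dist e' (Q e' j') =
          (clusterGraph G s).dist (Q e' j') e' := SimpleGraph.dist_comm
      omega
  have hsub1 : Tδ ∪ Set.range f ⊆ Tr := by
    intro z hz
    rcases hz with hz | ⟨⟨⟨e, heLv⟩, j⟩, rfl⟩
    · exact hTδTr z hz
    · exact hQTr e (hLvE heLv) j
  have hdisj : Disjoint Tδ (Set.range f) := by
    rw [Set.disjoint_right]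
    rintro z ⟨⟨⟨e, heLv⟩, j⟩, rfl⟩
    exact hQnot e (hLvE heLv) j
  have hcard1 : (Tδ ∪ Set.range f).ncard = Tδ.ncard + (Set.range f).ncard :=
    Set.ncard_union_eq hdisj (Set.toFinite _) (Set.toFinite _)
  have hcard2 : (Set.range f).ncard = Lv.ncard * δ := by
    have h1 : Nat.card (↥Lv × Fin δ) = Nat.card (Set.range f) :=
      (Nat.card_range_of_injective hfinj).symm
    rw [Nat.card_coe_set_eq] at h1
    rw [← h1, Nat.card_prod, Nat.card_coe_set_eq, Nat.card_eq_fintype_card,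
      Fintype.card_fin]
  have hle := Set.ncard_le_ncard hsub1 (Set.toFinite _)
  rw [hcard1, hcard2] at hle
  have hmc : δ * Lv.ncard = Lv.ncard * δ := Nat.mul_comm _ _
  omega



end LayerTree
/-- For a minimum `r`-dominating subtree `T_r` and a minimum
`(r+δ)`-dominating subtree `T_δ` of the layering partition 𝒯 (rooted as inherited
from 𝒯, with root `R`): `|T_δ| ≤ |T_r| − δ·Λ(T_δ)`. -/
theorem Tdelta_card_le_Tr_sub
    {V : Type} [Fintype V] (G : SimpleGraph V) (hconn : G.Connected)
    (s : V) (r : V → ℕ) (δ : ℕ)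
    (Tr Tδ : Set (Cluster G s))
    (hTr : IsMinDomSubtree G s r 0 Tr)
    (hTδ : IsMinDomSubtree G s r δ Tδ)
    (R : Cluster G s) (hR : IsRootOf G s Tδ R) :
    (Tδ.ncard : ℤ) ≤ (Tr.ncard : ℤ) - (δ : ℤ) * (numLeaves G s Tδ R : ℤ) := by
  have h := LayerTree.main_count hconn r δ Tr Tδ hTr hTδ R
  have h' : (Tδ.ncard : ℤ) + (δ : ℤ) * (numLeaves G s Tδ R : ℤ) ≤ (Tr.ncard : ℤ) := by
    exact_mod_cast h
  linarith
end

section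
/- Let T_δ be a subtree (with at least two clusters) of a layering partition 𝒯 of a finite connected graph G, rooted consistently with 𝒯. Then there exists a family 𝒫 = {P_1, …, P_λ} of paths of G, where λ equals the number of leaves of T_δ distinct from its root, such that every cluster C of T_δ is intersected by exactly one path P_i of 𝒫, and C and that path share exactly one vertex (|C ∩ P_i| = 1). In particular, the paths are vertex-disjoint and the total number of vertices on all paths equals the number of clusters of T_δ. -/
open SimpleGraph

variable {V : Type}

noncomputable def clusterLayer (G : SimpleGraph V) (s : V) (C : Cluster G s) : ℕ :=
  G.dist s (Quotient.out C)

lemma toCluster_eq_iff {G : SimpleGraph V} {s u v : V} :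
    toCluster G s u = toCluster G s v ↔ layerRel G s u v := Quotient.eq

lemma toCluster_out (G : SimpleGraph V) (s : V) (C : Cluster G s) :
    toCluster G s (Quotient.out C) = C := Quotient.out_eq C

lemma dist_eq_clusterLayer {G : SimpleGraph V} {s u : V} {C : Cluster G s}
    (h : toCluster G s u = C) : G.dist s u = clusterLayer G s C :=
  (toCluster_eq_iff.mp (h.trans (toCluster_out G s C).symm)).1

lemma dist_adj_le_one {G : SimpleGraph V} {u v : V} (h : G.Adj u v) : G.dist u v ≤ 1 := by
  simpa using SimpleGraph.dist_le (SimpleGraph.Walk.cons h SimpleGraph.Walk.nil)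

lemma same_layer_adj_rel {G : SimpleGraph V} {s u v : V} (h : G.Adj u v)
    (hd : G.dist s u = G.dist s v) : layerRel G s u v := by
  refine ⟨hd, SimpleGraph.Walk.cons h SimpleGraph.Walk.nil, ?_⟩
  intro x hx
  simp only [SimpleGraph.Walk.support_cons, SimpleGraph.Walk.support_nil,
    List.mem_cons, List.mem_singleton] at hx
  rcases hx with rfl | rfl | h
  · exact le_refl _
  · omega
  · simp at h

lemma adj_layer {G : SimpleGraph V} (hconn : G.Connected) {s : V} {C C' : Cluster G s}
    (h : (clusterGraph G s).Adj C C') :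
    clusterLayer G s C' + 1 = clusterLayer G s C ∨
    clusterLayer G s C + 1 = clusterLayer G s C' := by
  obtain ⟨hne, u, v, hu, hv, ha⟩ := h
  have d1 : G.dist u v ≤ 1 := dist_adj_le_one ha
  have d2 : G.dist v u ≤ 1 := dist_adj_le_one ha.symm
  have h1 : G.dist s v ≤ G.dist s u + G.dist u v := hconn.dist_triangle
  have h2 : G.dist s u ≤ G.dist s v + G.dist v u := hconn.dist_triangle
  have hne' : G.dist s u ≠ G.dist s v := by
    intro hd
    exact hne (hu ▸ hv ▸ toCluster_eq_iff.mpr (same_layer_adj_rel ha hd))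
  rw [dist_eq_clusterLayer hu, dist_eq_clusterLayer hv] at *
  omega

lemma exists_parent_vertex {G : SimpleGraph V} (hconn : G.Connected) {s v : V}
    (h : 1 ≤ G.dist s v) : ∃ u, G.Adj v u ∧ G.dist s u + 1 = G.dist s v := by
  obtain ⟨p, hp⟩ := (hconn s v).exists_walk_length_eq_dist
  have hvs : v ≠ s := by
    rintro rfl
    rw [SimpleGraph.dist_self] at h
    omega
  obtain ⟨x, ha, q, hq⟩ := SimpleGraph.Walk.exists_eq_cons_of_ne hvs p.reverse
  refine ⟨x, ha, ?_⟩
  have hlen : q.length + 1 = G.dist s v := by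
    have := congrArg SimpleGraph.Walk.length hq
    simpa [SimpleGraph.Walk.length_reverse, hp, Nat.add_comm] using this.symm
  have h1 : G.dist s x ≤ q.length := by
    have := SimpleGraph.dist_le q.reverse
    simpa [SimpleGraph.Walk.length_reverse] using this
  have d1 : G.dist x v ≤ 1 := dist_adj_le_one ha.symm
  have h2 : G.dist s v ≤ G.dist s x + G.dist x v := hconn.dist_triangle
  omega

noncomputable def parentC (G : SimpleGraph V) (s : V) (C : Cluster G s) : Cluster G s :=
  haveI : Nonempty V := ⟨Quotient.out C⟩
  toCluster G s (Classical.epsilon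
    (fun u => G.Adj (Quotient.out C) u ∧ G.dist s u + 1 = G.dist s (Quotient.out C)))

lemma parentC_witness {G : SimpleGraph V} (hconn : G.Connected) {s : V} {C : Cluster G s}
    (h : 1 ≤ clusterLayer G s C) :
    ∃ u, toCluster G s u = parentC G s C ∧ G.Adj (Quotient.out C) u ∧
      G.dist s u + 1 = clusterLayer G s C := by
  haveI : Nonempty V := ⟨Quotient.out C⟩
  have hspec := Classical.epsilon_spec (exists_parent_vertex hconn (v := Quotient.out C) h)
  exact ⟨_, rfl, hspec.1, hspec.2⟩

lemma parentC_layer {G : SimpleGraph V} (hconn : G.Connected) {s : V} {C : Cluster G s}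
    (h : 1 ≤ clusterLayer G s C) :
    clusterLayer G s (parentC G s C) + 1 = clusterLayer G s C := by
  obtain ⟨u, hu, -, hd⟩ := parentC_witness hconn h
  rw [← dist_eq_clusterLayer hu]; exact hd

/-- Any vertex adjacent-below a vertex of `C` lies in `parentC C`. -/
lemma toCluster_eq_parentC {G : SimpleGraph V} (hconn : G.Connected) {s v u : V}
    {C : Cluster G s} (hv : toCluster G s v = C) (ha : G.Adj v u)
    (hd : G.dist s u + 1 = G.dist s v) : toCluster G s u = parentC G s C := by
  have hl : 1 ≤ clusterLayer G s C := by rw [← dist_eq_clusterLayer hv]; omega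
  obtain ⟨w0, hw0, ha0, hd0⟩ := parentC_witness hconn hl
  rw [← hw0]
  apply toCluster_eq_iff.mpr
  -- walk u - v - (walk inside C) - C.out - w0
  have hrel : layerRel G s v (Quotient.out C) :=
    toCluster_eq_iff.mp (hv.trans (toCluster_out G s C).symm)
  obtain ⟨hdv, wm, hwm⟩ := hrel
  have hdu : G.dist s u = G.dist s v - 1 := by omega
  have hdw0 : G.dist s u = G.dist s w0 := by
    have := dist_eq_clusterLayer hv; omega
  refine ⟨hdw0, SimpleGraph.Walk.cons ha.symm (wm.append
    (SimpleGraph.Walk.cons ha0 SimpleGraph.Walk.nil)), ?_⟩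
  intro x hx
  simp only [SimpleGraph.Walk.support_cons, List.mem_cons,
    SimpleGraph.Walk.mem_support_append_iff, SimpleGraph.Walk.support_nil,
    List.mem_singleton] at hx
  rcases hx with rfl | hx | rfl | rfl | h
  · exact le_refl _
  · have := hwm x hx; omega
  · omega
  · omega
  · simp at h

lemma adj_parentC {G : SimpleGraph V} (hconn : G.Connected) {s : V} {C : Cluster G s}
    (h : 1 ≤ clusterLayer G s C) : (clusterGraph G s).Adj C (parentC G s C) := by
  obtain ⟨u, hu, ha, hd⟩ := parentC_witness hconn h
  refine ⟨?_, Quotient.out C, u, toCluster_out G s C, hu, ha⟩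
  intro hEq
  have := parentC_layer hconn h
  rw [← hEq] at this; omega

lemma adj_down_eq_parentC {G : SimpleGraph V} (hconn : G.Connected) {s : V}
    {C C' : Cluster G s} (h : (clusterGraph G s).Adj C C')
    (hd : clusterLayer G s C' + 1 = clusterLayer G s C) : C' = parentC G s C := by
  obtain ⟨-, u, v, hu, hv, ha⟩ := h
  rw [← hv]
  exact toCluster_eq_parentC hconn hu ha
    (by rw [dist_eq_clusterLayer hu, dist_eq_clusterLayer hv]; exact hd)

/-- Lift a walk of the cluster graph staying in layers `≥ i` to a walk of `G`
staying in layers `≥ i`. -/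
lemma lift_walk {G : SimpleGraph V} {s : V} {C C' : Cluster G s}
    (p : (clusterGraph G s).Walk C C') (i : ℕ)
    (hp : ∀ D ∈ p.support, i ≤ clusterLayer G s D) :
    ∃ (u v : V) (w : G.Walk u v), toCluster G s u = C ∧ toCluster G s v = C' ∧
      ∀ x ∈ w.support, i ≤ G.dist s x := by
  revert hp
  induction p with
  | @nil C =>
    intro hp
    refine ⟨Quotient.out C, Quotient.out C, SimpleGraph.Walk.nil,
      toCluster_out G s C, toCluster_out G s C, ?_⟩
    intro x hx
    simp only [SimpleGraph.Walk.support_nil, List.mem_singleton] at hx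
    subst hx
    exact hp C (by simp)
  | @cons C D C' h q ih =>
    intro hp
    obtain ⟨-, a, b, ha, hb, hab⟩ := id h
    obtain ⟨u', v', w', hu', hv', hw'⟩ := ih (fun E hE => hp E (by
      simp only [SimpleGraph.Walk.support_cons, List.mem_cons]; exact Or.inr hE))
    have hrel : layerRel G s b u' := toCluster_eq_iff.mp (hb.trans hu'.symm)
    obtain ⟨hdb, wm, hwm⟩ := hrel
    have hDb : G.dist s b = clusterLayer G s D := dist_eq_clusterLayer hb
    have hD : i ≤ clusterLayer G s D := hp D (by
      simp only [SimpleGraph.Walk.support_cons, List.mem_cons]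
      exact Or.inr (SimpleGraph.Walk.start_mem_support q))
    refine ⟨a, v', SimpleGraph.Walk.cons hab (wm.append w'), ha, hv', ?_⟩
    intro x hx
    simp only [SimpleGraph.Walk.support_cons, List.mem_cons,
      SimpleGraph.Walk.mem_support_append_iff] at hx
    rcases hx with rfl | hx | hx
    · rw [dist_eq_clusterLayer ha]
      exact hp C (by simp [SimpleGraph.Walk.support_cons])
    · have := hwm x hx; omega
    · exact hw' x hx

/-- Two clusters at layer `i` joined by a cluster walk staying in layers `≥ i`
are equal. -/
lemma same_cluster_of_high_walk {G : SimpleGraph V} {s : V} {C C' : Cluster G s}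
    (p : (clusterGraph G s).Walk C C') {i : ℕ}
    (hp : ∀ D ∈ p.support, i ≤ clusterLayer G s D)
    (hC : clusterLayer G s C = i) (hC' : clusterLayer G s C' = i) : C = C' := by
  obtain ⟨u, v, w, hu, hv, hw⟩ := lift_walk p i hp
  have h1 : G.dist s u = i := by rw [dist_eq_clusterLayer hu]; exact hC
  have h2 : G.dist s v = i := by rw [dist_eq_clusterLayer hv]; exact hC'
  rw [← hu, ← hv]
  exact toCluster_eq_iff.mpr ⟨by omega, w, fun x hx => by rw [h1]; exact hw x hx⟩

lemma layer_le_walk_length {G : SimpleGraph V} (hconn : G.Connected) {s : V}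
    {C C' : Cluster G s} (p : (clusterGraph G s).Walk C C') :
    clusterLayer G s C' ≤ clusterLayer G s C + p.length := by
  induction p with
  | nil => simp
  | @cons C D C' h q ih =>
    have := adj_layer hconn h
    simp only [SimpleGraph.Walk.length_cons]
    omega

lemma layer_zero_eq_root {G : SimpleGraph V} (hconn : G.Connected) {s : V}
    {C : Cluster G s} (h : clusterLayer G s C = 0) : C = toCluster G s s := by
  have : Quotient.out C = s := ((hconn s (Quotient.out C)).dist_eq_zero_iff).mp h |>.symm
  rw [← toCluster_out G s C, this]

lemma exists_walk_root {G : SimpleGraph V} (hconn : G.Connected) {s : V} :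
    ∀ (n : ℕ) (C : Cluster G s), clusterLayer G s C = n →
      ∃ w : (clusterGraph G s).Walk (toCluster G s s) C, w.length = n := by
  intro n
  induction n with
  | zero =>
    intro C hC
    rw [layer_zero_eq_root hconn hC]
    exact ⟨SimpleGraph.Walk.nil, rfl⟩
  | succ n ih =>
    intro C hC
    have h1 : 1 ≤ clusterLayer G s C := by omega
    have hp := parentC_layer hconn h1
    obtain ⟨w, hw⟩ := ih (parentC G s C) (by omega)
    exact ⟨w.concat (adj_parentC hconn h1).symm, by
      rw [SimpleGraph.Walk.length_concat, hw]⟩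

lemma root_layer {G : SimpleGraph V} {s : V} :
    clusterLayer G s (toCluster G s s) = 0 := by
  rw [← dist_eq_clusterLayer (rfl : toCluster G s s = toCluster G s s)]
  exact SimpleGraph.dist_self

lemma dist_root_eq_layer {G : SimpleGraph V} (hconn : G.Connected) {s : V}
    (C : Cluster G s) :
    (clusterGraph G s).dist (toCluster G s s) C = clusterLayer G s C := by
  obtain ⟨w, hw⟩ := exists_walk_root hconn (clusterLayer G s C) C rfl
  refine le_antisymm (hw ▸ SimpleGraph.dist_le w) ?_
  obtain ⟨p, hp⟩ := SimpleGraph.Reachable.exists_walk_length_eq_dist ⟨w⟩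
  have := layer_le_walk_length hconn p
  rw [hp, root_layer] at this
  omega

lemma first_drop {G : SimpleGraph V} (hconn : G.Connected) {s : V}
    {A D : Cluster G s} (p : (clusterGraph G s).Walk A D) (i : ℕ)
    (hA : i ≤ clusterLayer G s A) (hD : clusterLayer G s D < i) :
    ∃ B₁ B₂ : Cluster G s,
      (∃ w : (clusterGraph G s).Walk A B₁, ∀ X ∈ w.support, i ≤ clusterLayer G s X) ∧
      clusterLayer G s B₁ = i ∧ (clusterGraph G s).Adj B₁ B₂ ∧
      clusterLayer G s B₂ + 1 = i ∧ B₂ ∈ p.support := by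
  revert hA hD
  induction p with
  | @nil A =>
    intro hA hD
    omega
  | @cons A A₁ D h q ih =>
    intro hA hD
    by_cases h1 : i ≤ clusterLayer G s A₁
    · obtain ⟨B₁, B₂, ⟨w, hw⟩, hB₁, hadj, hB₂, hmem⟩ := ih h1 hD
      refine ⟨B₁, B₂, ⟨SimpleGraph.Walk.cons h w, ?_⟩, hB₁, hadj, hB₂, ?_⟩
      · intro X hX
        simp only [SimpleGraph.Walk.support_cons, List.mem_cons] at hX
        rcases hX with rfl | hX
        · exact hA
        · exact hw X hX
      · simp only [SimpleGraph.Walk.support_cons, List.mem_cons]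
        exact Or.inr hmem
    · have hlev := adj_layer hconn h
      have hgoal1 : clusterLayer G s A = i := by omega
      have hgoal2 : clusterLayer G s A₁ + 1 = i := by omega
      refine ⟨A, A₁, ⟨SimpleGraph.Walk.nil, ?_⟩, hgoal1, h, hgoal2, ?_⟩
      · intro X hX
        simp only [SimpleGraph.Walk.support_nil, List.mem_singleton] at hX
        subst hX; exact hA
      · simp only [SimpleGraph.Walk.support_cons, List.mem_cons]
        exact Or.inr (SimpleGraph.Walk.start_mem_support q)


lemma subtree_walk {G : SimpleGraph V} {s : V} {T' : Set (Cluster G s)}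
    (hsub : IsSubtree G s T') {C D : Cluster G s} (hC : C ∈ T') (hD : D ∈ T') :
    ∃ p : (clusterGraph G s).Walk C D, ∀ X ∈ p.support, X ∈ T' := by
  obtain ⟨q⟩ := hsub.preconnected ⟨C, hC⟩ ⟨D, hD⟩
  let f : ((clusterGraph G s).induce T') →g (clusterGraph G s) :=
    ⟨Subtype.val, fun {a b} h => h⟩
  refine ⟨q.map f, ?_⟩
  intro X hX
  rw [SimpleGraph.Walk.support_map, List.mem_map] at hX
  obtain ⟨⟨Y, hY⟩, -, rfl⟩ := hX
  exact hY

section Subtree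

variable {G : SimpleGraph V} {s : V} {Tδ : Set (Cluster G s)} {R : Cluster G s}

lemma root_layer_le (hconn : G.Connected) (hR : IsRootOf G s Tδ R)
    {C : Cluster G s} (hC : C ∈ Tδ) : clusterLayer G s R ≤ clusterLayer G s C := by
  have := hR.2 C hC
  rwa [dist_root_eq_layer hconn, dist_root_eq_layer hconn] at this

lemma layer_pos_of_ne_root (hconn : G.Connected) (hR : IsRootOf G s Tδ R)
    {C : Cluster G s} (hC : C ∈ Tδ) (hne : C ≠ R) : 1 ≤ clusterLayer G s C := by
  by_contra h
  have h0 : clusterLayer G s C = 0 := by omega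
  have hRl : clusterLayer G s R = 0 := by
    have := root_layer_le hconn hR hC; omega
  exact hne ((layer_zero_eq_root hconn h0).trans (layer_zero_eq_root hconn hRl).symm)

lemma parentC_mem_subtree (hconn : G.Connected) (hsub : IsSubtree G s Tδ)
    (hR : IsRootOf G s Tδ R) {C : Cluster G s} (hC : C ∈ Tδ) (hne : C ≠ R) :
    parentC G s C ∈ Tδ := by
  classical
  set i := clusterLayer G s C with hi
  obtain ⟨p, hp⟩ := subtree_walk hsub hC hR.1
  by_cases hdrop : ∃ D ∈ p.support, clusterLayer G s D < i
  · obtain ⟨D₀, hD₀mem, hD₀⟩ := hdrop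
    have hq := p.support_takeUntil_subset hD₀mem
    obtain ⟨B₁, B₂, ⟨w, hw⟩, hB₁, hadj, hB₂, hmem⟩ :=
      first_drop hconn (p.takeUntil D₀ hD₀mem) i (le_refl i) hD₀
    have hB₁C : C = B₁ := same_cluster_of_high_walk w hw rfl hB₁
    have : B₂ = parentC G s C := by
      apply adj_down_eq_parentC hconn (hB₁C ▸ hadj)
      omega
    rw [← this]
    exact hp B₂ (hq hmem)
  · push_neg at hdrop
    exfalso
    apply hne
    have hRi : clusterLayer G s R = i := by
      have h1 := hdrop R (SimpleGraph.Walk.end_mem_support p)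
      have h2 := root_layer_le hconn hR hC
      omega
    exact same_cluster_of_high_walk p hdrop rfl hRi

lemma root_layer_lt (hconn : G.Connected) (hsub : IsSubtree G s Tδ)
    (hR : IsRootOf G s Tδ R) {C : Cluster G s} (hC : C ∈ Tδ) (hne : C ≠ R) :
    clusterLayer G s R < clusterLayer G s C := by
  have h1 := root_layer_le hconn hR (parentC_mem_subtree hconn hsub hR hC hne)
  have h2 := parentC_layer hconn (layer_pos_of_ne_root hconn hR hC hne)
  omega

end Subtree

section Degree

variable {G : SimpleGraph V} {s : V} {Tδ : Set (Cluster G s)} {R : Cluster G s}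

lemma nbr_set_eq (hconn : G.Connected) (hsub : IsSubtree G s Tδ)
    (hR : IsRootOf G s Tδ R) {C : Cluster G s} (hC : C ∈ Tδ) (hne : C ≠ R) :
    {C' : Cluster G s | C' ∈ Tδ ∧ (clusterGraph G s).Adj C C'} =
      insert (parentC G s C)
        {C' : Cluster G s | C' ∈ Tδ ∧ C' ≠ R ∧ parentC G s C' = C} := by
  have hCl : 1 ≤ clusterLayer G s C := layer_pos_of_ne_root hconn hR hC hne
  ext C'
  simp only [Set.mem_setOf_eq, Set.mem_insert_iff]
  constructor
  · rintro ⟨hmem, hadj⟩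
    rcases adj_layer hconn hadj with hdown | hup
    · exact Or.inl (adj_down_eq_parentC hconn hadj hdown).symm.symm
    · refine Or.inr ⟨hmem, ?_, (adj_down_eq_parentC hconn hadj.symm hup).symm⟩
      intro hR'
      have := root_layer_le hconn hR hC
      rw [hR'] at hup
      omega
  · rintro (rfl | ⟨hmem, hneR, hpar⟩)
    · exact ⟨parentC_mem_subtree hconn hsub hR hC hne, adj_parentC hconn hCl⟩
    · have hCl' : 1 ≤ clusterLayer G s C' := layer_pos_of_ne_root hconn hR hmem hneR
      exact ⟨hmem, hpar ▸ (adj_parentC hconn hCl').symm⟩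

lemma degree_eq_one_iff [Finite V] (hconn : G.Connected) (hsub : IsSubtree G s Tδ)
    (hR : IsRootOf G s Tδ R) {C : Cluster G s} (hC : C ∈ Tδ) (hne : C ≠ R) :
    clusterDegree G s Tδ C = 1 ↔
      ∀ C' ∈ Tδ, C' ≠ R → parentC G s C' ≠ C := by
  haveI : Finite (Cluster G s) := Quotient.finite _
  have hCl : 1 ≤ clusterLayer G s C := layer_pos_of_ne_root hconn hR hC hne
  have hparl := parentC_layer hconn hCl
  have hnotmem : parentC G s C ∉
      {C' : Cluster G s | C' ∈ Tδ ∧ C' ≠ R ∧ parentC G s C' = C} := by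
    rintro ⟨hmem, hneR, hpar⟩
    have h1 : 1 ≤ clusterLayer G s (parentC G s C) :=
      layer_pos_of_ne_root hconn hR hmem hneR
    have h2 := parentC_layer hconn h1
    rw [hpar] at h2
    omega
  rw [clusterDegree, nbr_set_eq hconn hsub hR hC hne,
    Set.ncard_insert_of_notMem hnotmem (Set.toFinite _)]
  rw [Nat.add_eq_right.symm.symm]
  constructor
  · intro h
    have h0 : {C' : Cluster G s | C' ∈ Tδ ∧ C' ≠ R ∧ parentC G s C' = C}.ncard = 0 := by
      omega
    rw [Set.ncard_eq_zero (Set.toFinite _)] at h0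
    intro C' hmem hneR hpar
    have : C' ∈ {C' : Cluster G s | C' ∈ Tδ ∧ C' ≠ R ∧ parentC G s C' = C} :=
      ⟨hmem, hneR, hpar⟩
    rw [h0] at this
    exact this
  · intro h
    have : {C' : Cluster G s | C' ∈ Tδ ∧ C' ≠ R ∧ parentC G s C' = C} = ∅ := by
      ext C'
      simp only [Set.mem_setOf_eq, Set.mem_empty_iff_false, iff_false, not_and]
      intro hmem hneR
      exact h C' hmem hneR
    rw [this, Set.ncard_empty]

end Degree

section Chains

variable {α : Type}

/-- The set of leaves (`≠ R`, no child in `S`) of the tree on `S` given by `par`. -/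
def chainLeaves (S : Set α) (R : α) (par : α → α) : Set α :=
  {x | x ∈ S ∧ x ≠ R ∧ ∀ y ∈ S, y ≠ R → par y ≠ x}

/-- A family of "vertical chains" decomposing `S`. -/
structure ChainFam (S : Set α) (R : α) (par : α → α) (k : ℕ)
    (c : Fin k → List α) : Prop where
  nonnil : ∀ i, c i ≠ []
  chain : ∀ i, (c i).Chain' (fun a b => par a = b)
  dropR : ∀ i, ∀ a ∈ (c i).dropLast, a ≠ R
  memS : ∀ i, ∀ a ∈ c i, a ∈ S
  nodup : ∀ i, (c i).Nodup
  cover : ∀ x ∈ S, ∃! i, x ∈ c i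
  total : (∑ i, (c i).length) = S.ncard

lemma chain'_exists_pred {rel : α → α → Prop} :
    ∀ {l : List α}, l.Chain' rel → ∀ {p h₀ : α}, p ∈ l → l.head? = some h₀ →
      p ≠ h₀ → ∃ y ∈ l.dropLast, rel y p := by
  intro l
  induction l with
  | nil => intro _ p h₀ hmem; simp at hmem
  | cons a t ih =>
    intro hc p h₀ hmem hhead hne
    simp only [List.head?_cons, Option.some.injEq] at hhead
    subst hhead
    rcases List.mem_cons.mp hmem with rfl | hmem'
    · exact absurd rfl hne
    · match t, hmem' with
      | b :: t', hmem' =>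
        have hrel : rel a b := (List.isChain_cons_cons.mp hc).1
        have hct : (b :: t').Chain' rel := (List.isChain_cons_cons.mp hc).2
        by_cases hpb : p = b
        · subst hpb
          refine ⟨a, ?_, hrel⟩
          simp [List.dropLast_cons₂]
        · obtain ⟨y, hy, hrely⟩ := ih hct hmem' rfl hpb
          refine ⟨y, ?_, hrely⟩
          simp only [List.dropLast_cons₂, List.mem_cons]
          exact Or.inr hy

lemma chain_decomp [Finite α] :
    ∀ (n : ℕ) (S : Set α) (R : α) (ℓ : α → ℕ) (par : α → α), R ∈ S →
    (∀ x ∈ S, x ≠ R → par x ∈ S ∧ ℓ (par x) + 1 = ℓ x ∧ ℓ R < ℓ x) →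
    S.ncard = n + 2 →
    ∃ (k : ℕ) (c : Fin k → List α), ChainFam S R par k c ∧
      k = (chainLeaves S R par).ncard := by
  intro n
  induction n with
  | zero =>
    intro S R ℓ par hR hpar hcard
    obtain ⟨a, b, hab, hS⟩ := Set.ncard_eq_two.mp hcard
    have hx : ∃ x, x ≠ R ∧ S = {R, x} := by
      subst hS
      rcases hR with rfl | rfl
      · exact ⟨b, fun h => hab h.symm, rfl⟩
      · exact ⟨a, fun h => hab h, by ext z; simp [or_comm]⟩
    obtain ⟨x, hxR, hS'⟩ := hx
    have hxS : x ∈ S := by rw [hS']; right; rfl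
    have hpx := hpar x hxS hxR
    have hparx : par x = R := by
      have h1 : par x ∈ S := hpx.1
      rw [hS'] at h1
      rcases h1 with h1 | h1
      · exact h1
      · exfalso
        have := hpx.2.1
        rw [show par x = x from h1] at this
        omega
    refine ⟨1, fun _ => [x, R], ?_, ?_⟩
    · constructor
      · intro i; simp
      · intro i
        show List.IsChain _ _; simp [List.isChain_cons_cons, hparx]
      · intro i a' ha'
        rw [show ([x, R] : List α).dropLast = [x] from rfl, List.mem_singleton] at ha'
        subst ha'; exact hxR
      · intro i a' ha'
        simp only [List.mem_cons, List.mem_singleton] at ha'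
        rcases ha' with rfl | rfl | h
        · exact hxS
        · exact hR
        · simp at h
      · intro i
        simp [hxR]
      · intro z hz
        refine ⟨0, ?_, ?_⟩
        · rw [hS'] at hz
          rcases hz with rfl | rfl <;> simp
        · intro j _
          exact Subsingleton.elim j 0
      · simp [hcard]
    · have hset : chainLeaves S R par = {x} := by
        ext z
        simp only [chainLeaves, Set.mem_setOf_eq, Set.mem_singleton_iff]
        constructor
        · rintro ⟨hzS, hzR, -⟩
          rw [hS', Set.mem_insert_iff, Set.mem_singleton_iff] at hzS
          tauto
        · intro hz
          subst hz
          refine ⟨hxS, hxR, ?_⟩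
          intro y hy hyR
          rw [hS', Set.mem_insert_iff, Set.mem_singleton_iff] at hy
          have hyx : y = z := by tauto
          subst hyx
          rw [hparx]
          exact fun h => hxR h.symm
      rw [hset, Set.ncard_singleton]
  | succ n ih =>
    intro S R ℓ par hR hpar hcard
    have hSfin : S.Finite := Set.toFinite S
    have hSne : S.Nonempty := by
      have h0 : 0 < S.ncard := by omega
      exact (Set.ncard_pos hSfin).mp h0
    obtain ⟨x, hxS, hxmax⟩ := Set.exists_max_image S ℓ hSfin hSne
    have hxR : x ≠ R := by
      rintro rfl
      obtain ⟨y, hy, hyx⟩ := Set.exists_ne_of_one_lt_ncard (s := S) (by omega) x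
      have h3 := (hpar y hy hyx).2.2
      have := hxmax y hy
      omega
    have hxleaf : ∀ y ∈ S, y ≠ R → par y ≠ x := by
      intro y hy hyR hpy
      have h1 := (hpar y hy hyR).2.1
      rw [hpy] at h1
      have := hxmax y hy
      omega
    set p := par x with hpdef
    have hpx := hpar x hxS hxR
    have hpS : p ∈ S := hpx.1
    have hpnex : p ≠ x := by
      intro h
      have h2 := hpx.2.1
      rw [show par x = p from rfl, h] at h2
      omega
    set S' := S \ {x} with hS'def
    have hS'card : S'.ncard = n + 2 := by
      rw [hS'def, Set.ncard_diff_singleton_of_mem hxS]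
      omega
    have hRS' : R ∈ S' := ⟨hR, fun h => hxR (by
      simp only [Set.mem_singleton_iff] at h
      exact h.symm)⟩
    have hpar' : ∀ y ∈ S', y ≠ R → par y ∈ S' ∧ ℓ (par y) + 1 = ℓ y ∧ ℓ R < ℓ y := by
      intro y hy hyR
      obtain ⟨h1, h2, h3⟩ := hpar y hy.1 hyR
      exact ⟨⟨h1, fun hmem => hxleaf y hy.1 hyR (by simpa using hmem)⟩, h2, h3⟩
    obtain ⟨k', c', fam', hk'⟩ := ih S' R ℓ par hRS' hpar' hS'card
    have hpS' : p ∈ S' := ⟨hpS, fun h => hpnex (by simpa using h)⟩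
    have hxnotS' : x ∉ S' := fun h => h.2 rfl
    have hxleafS : x ∈ chainLeaves S R par := ⟨hxS, hxR, hxleaf⟩
    by_cases hA : p = R ∨ ∃ y, y ∈ S ∧ y ≠ R ∧ y ≠ x ∧ par y = p
    · -- Case A: add the singleton chain `[x]`
      have hleaves : chainLeaves S' R par = chainLeaves S R par \ {x} := by
        ext z
        constructor
        · rintro ⟨hzS', hzR, hz⟩
          refine ⟨⟨hzS'.1, hzR, ?_⟩, hzS'.2⟩
          intro y hy hyR hpy
          by_cases hyx : y = x
          · subst hyx
            have hzp : z = p := by rw [← hpy]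
            rcases hA with hA | ⟨y₀, hy₀S, hy₀R, hy₀x, hy₀p⟩
            · exact hzR (hzp.trans hA)
            · exact (hz y₀ ⟨hy₀S, hy₀x⟩ hy₀R) (hy₀p.trans hzp.symm)
          · exact hz y ⟨hy, hyx⟩ hyR hpy
        · rintro ⟨⟨hzS, hzR, hz⟩, hzx⟩
          exact ⟨⟨hzS, hzx⟩, hzR, fun y hy hyR => hz y hy.1 hyR⟩
      have hkcount : (chainLeaves S R par).ncard = k' + 1 := by
        have hpos : 0 < (chainLeaves S R par).ncard :=
          (Set.ncard_pos (Set.toFinite _)).mpr ⟨x, hxleafS⟩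
        rw [hk', hleaves, Set.ncard_diff_singleton_of_mem hxleafS]
        omega
      refine ⟨k' + 1, Fin.cons [x] c', ?_, hkcount.symm⟩
      constructor
      · intro i
        rcases Fin.eq_zero_or_eq_succ i with rfl | ⟨j, rfl⟩
        · simp
        · simpa using fam'.nonnil j
      · intro i
        rcases Fin.eq_zero_or_eq_succ i with rfl | ⟨j, rfl⟩
        · exact List.isChain_singleton _
        · simpa using fam'.chain j
      · intro i a ha
        rcases Fin.eq_zero_or_eq_succ i with rfl | ⟨j, rfl⟩
        · simp at ha
        · rw [Fin.cons_succ] at ha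
          exact fam'.dropR j a ha
      · intro i a ha
        rcases Fin.eq_zero_or_eq_succ i with rfl | ⟨j, rfl⟩
        · rw [Fin.cons_zero, List.mem_singleton] at ha
          subst ha; exact hxS
        · rw [Fin.cons_succ] at ha
          exact (fam'.memS j a ha).1
      · intro i
        rcases Fin.eq_zero_or_eq_succ i with rfl | ⟨j, rfl⟩
        · simp
        · simpa using fam'.nodup j
      · intro z hz
        by_cases hzx : z = x
        · subst hzx
          refine ⟨0, by simp, ?_⟩
          intro j hj
          rcases Fin.eq_zero_or_eq_succ j with rfl | ⟨j', rfl⟩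
          · rfl
          · rw [Fin.cons_succ] at hj
            exact absurd (fam'.memS j' z hj) hxnotS'
        · have hzS' : z ∈ S' := ⟨hz, fun h => hzx (by simpa using h)⟩
          obtain ⟨j₀, hj₀, huniq⟩ := fam'.cover z hzS'
          refine ⟨j₀.succ, ?_, ?_⟩
          · simp only [Fin.cons_succ]
            exact hj₀
          · intro j hj
            rcases Fin.eq_zero_or_eq_succ j with rfl | ⟨j', rfl⟩
            · simp only [Fin.cons_zero, List.mem_singleton] at hj
              exact absurd hj hzx
            · simp only [Fin.cons_succ] at hj
              rw [huniq j' hj]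
      · rw [Fin.sum_univ_succ]
        simp only [Fin.cons_zero, Fin.cons_succ, List.length_singleton]
        rw [fam'.total, hS'card]
        omega
    · -- Case B: extend the chain whose head is `p` by `x`
      push_neg at hA
      obtain ⟨hpR, hponly⟩ := hA
      have hpleaf' : p ∈ chainLeaves S' R par := by
        refine ⟨hpS', hpR, ?_⟩
        intro y hy hyR hpy
        exact hponly y hy.1 hyR (fun h => hy.2 (by simp [h])) hpy
      have hpnotleaf : p ∉ chainLeaves S R par := by
        rintro ⟨-, -, hp3⟩
        exact hp3 x hxS hxR rfl
      have hleaves : chainLeaves S' R par = insert p (chainLeaves S R par \ {x}) := by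
        ext z
        rw [Set.mem_insert_iff]
        constructor
        · rintro ⟨hzS', hzR, hz⟩
          by_cases hzp : z = p
          · exact Or.inl hzp
          · refine Or.inr ⟨⟨hzS'.1, hzR, ?_⟩, hzS'.2⟩
            intro y hy hyR hpy
            by_cases hyx : y = x
            · subst hyx
              exact hzp (by rw [← hpy])
            · exact hz y ⟨hy, hyx⟩ hyR hpy
        · rintro (rfl | ⟨⟨hzS, hzR, hz⟩, hzx⟩)
          · exact hpleaf'
          · exact ⟨⟨hzS, hzx⟩, hzR, fun y hy hyR => hz y hy.1 hyR⟩
      have hkeq : (chainLeaves S R par).ncard = k' := by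
        have hpos : 0 < (chainLeaves S R par).ncard :=
          (Set.ncard_pos (Set.toFinite _)).mpr ⟨x, hxleafS⟩
        have hpnm : p ∉ chainLeaves S R par \ {x} := fun h => hpnotleaf h.1
        rw [hk', hleaves, Set.ncard_insert_of_notMem hpnm (Set.toFinite _),
          Set.ncard_diff_singleton_of_mem hxleafS]
        omega
      obtain ⟨i₀, hpmem, -⟩ := fam'.cover p hpS'
      have hhead : (c' i₀).head? = some p := by
        obtain ⟨h₀, t₀, hl⟩ : ∃ h₀ t₀, c' i₀ = h₀ :: t₀ := by
          cases hni : c' i₀ with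
          | nil => exact absurd hni (fam'.nonnil i₀)
          | cons h₀ t₀ => exact ⟨h₀, t₀, rfl⟩
        rw [hl, List.head?_cons, Option.some.injEq]
        by_contra hne
        have hne' : p ≠ h₀ := fun h => hne h.symm
        obtain ⟨y, hy, hrely⟩ := chain'_exists_pred (fam'.chain i₀) hpmem
          (by rw [hl, List.head?_cons]) hne'
        have hyS' : y ∈ S' := fam'.memS i₀ y (List.dropLast_subset _ hy)
        have hyR : y ≠ R := fam'.dropR i₀ y hy
        exact hpleaf'.2.2 y hyS' hyR hrely
      refine ⟨k', Function.update c' i₀ (x :: c' i₀), ?_, hkeq.symm⟩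
      have hxnotc : ∀ j, x ∉ c' j := fun j h => hxnotS' (fam'.memS j x h)
      constructor
      · intro i
        by_cases hi : i = i₀
        · subst hi; rw [Function.update_self]; simp
        · rw [Function.update_of_ne hi]; exact fam'.nonnil i
      · intro i
        by_cases hi : i = i₀
        · subst hi
          rw [Function.update_self]; show List.IsChain _ _; rw [List.isChain_cons]
          refine ⟨?_, fam'.chain i⟩
          intro y hy
          rw [hhead, Option.mem_def, Option.some.injEq] at hy
          rw [← hy]
        · rw [Function.update_of_ne hi]; exact fam'.chain i
      · intro i a ha
        by_cases hi : i = i₀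
        · subst hi
          rw [Function.update_self,
            List.dropLast_cons_of_ne_nil (fam'.nonnil i), List.mem_cons] at ha
          rcases ha with rfl | ha
          · exact hxR
          · exact fam'.dropR i a ha
        · rw [Function.update_of_ne hi] at ha; exact fam'.dropR i a ha
      · intro i a ha
        by_cases hi : i = i₀
        · subst hi
          rw [Function.update_self, List.mem_cons] at ha
          rcases ha with rfl | ha
          · exact hxS
          · exact (fam'.memS i a ha).1
        · rw [Function.update_of_ne hi] at ha; exact (fam'.memS i a ha).1
      · intro i
        by_cases hi : i = i₀
        · subst hi
          rw [Function.update_self, List.nodup_cons]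
          exact ⟨hxnotc i, fam'.nodup i⟩
        · rw [Function.update_of_ne hi]; exact fam'.nodup i
      · intro z hz
        by_cases hzx : z = x
        · subst hzx
          refine ⟨i₀, ?_, ?_⟩
          · show z ∈ Function.update c' i₀ (z :: c' i₀) i₀
            rw [Function.update_self]
            exact List.mem_cons_self
          · intro j hj
            by_cases hji : j = i₀
            · exact hji
            · have hj' : z ∈ Function.update c' i₀ (z :: c' i₀) j := hj
              rw [Function.update_of_ne hji] at hj'
              exact absurd hj' (hxnotc j)
        · have hzS' : z ∈ S' := ⟨hz, fun h => hzx (by simpa using h)⟩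
          obtain ⟨j₀, hj₀, huniq⟩ := fam'.cover z hzS'
          refine ⟨j₀, ?_, ?_⟩
          · show z ∈ Function.update c' i₀ (x :: c' i₀) j₀
            by_cases hji : j₀ = i₀
            · subst hji
              rw [Function.update_self]
              exact List.mem_cons_of_mem _ hj₀
            · rwa [Function.update_of_ne hji]
          · intro j hj
            apply huniq
            have hj' : z ∈ Function.update c' i₀ (x :: c' i₀) j := hj
            show z ∈ c' j
            by_cases hji : j = i₀
            · subst hji
              rw [Function.update_self, List.mem_cons] at hj'
              rcases hj' with rfl | hj'
              · exact absurd rfl hzx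
              · exact hj'
            · rwa [Function.update_of_ne hji] at hj'
      · have hcong : ∀ i, ((Function.update c' i₀ (x :: c' i₀)) i).length =
            Function.update (fun j => (c' j).length) i₀ (x :: c' i₀).length i := by
          intro i
          by_cases hi : i = i₀
          · subst hi; rw [Function.update_self, Function.update_self]
          · rw [Function.update_of_ne hi, Function.update_of_ne hi]
        rw [Finset.sum_congr rfl (fun i _ => hcong i),
          Finset.sum_update_of_mem (Finset.mem_univ i₀), ← Finset.erase_eq]
        have hold : ∑ i, (c' i).length = S'.ncard := fam'.total
        rw [← Finset.add_sum_erase Finset.univ _ (Finset.mem_univ i₀)] at hold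
        simp only [List.length_cons]
        omega

end Chains

lemma path_lift {G : SimpleGraph V} (hconn : G.Connected) {s : V} :
    ∀ (t : List (Cluster G s)) (C : Cluster G s) (v : V), toCluster G s v = C →
      (C :: t).Chain' (fun a b => parentC G s a = b) →
      (∀ a ∈ (C :: t).dropLast, 1 ≤ clusterLayer G s a) →
      ∃ (b : V) (w : G.Walk v b), w.support.map (toCluster G s) = C :: t := by
  intro t
  induction t with
  | nil =>
    intro C v hv _ _
    exact ⟨v, SimpleGraph.Walk.nil, by simp [hv]⟩
  | cons C' t' ih =>
    intro C v hv hchain hlayer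
    have hC1 : 1 ≤ clusterLayer G s C := by
      apply hlayer C
      rw [List.dropLast_cons₂]
      exact List.mem_cons_self
    have hdv : 1 ≤ G.dist s v := by rw [dist_eq_clusterLayer hv]; exact hC1
    obtain ⟨u, hadj, hdist⟩ := exists_parent_vertex hconn hdv
    have hu : toCluster G s u = parentC G s C := toCluster_eq_parentC hconn hv hadj hdist
    have hpar : parentC G s C = C' := (List.isChain_cons_cons.mp hchain).1
    obtain ⟨b, w, hw⟩ := ih C' u (hu.trans hpar) (List.isChain_cons_cons.mp hchain).2
      (fun a ha => hlayer a (by rw [List.dropLast_cons₂, List.mem_cons]; exact Or.inr ha))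
    refine ⟨b, SimpleGraph.Walk.cons hadj w, ?_⟩
    rw [SimpleGraph.Walk.support_cons, List.map_cons, hw, hv]

lemma numLeaves_eq_chainLeaves [Finite V] {G : SimpleGraph V} (hconn : G.Connected)
    {s : V} {Tδ : Set (Cluster G s)} {R : Cluster G s} (hsub : IsSubtree G s Tδ)
    (hR : IsRootOf G s Tδ R) :
    numLeaves G s Tδ R = (chainLeaves Tδ R (parentC G s)).ncard := by
  unfold numLeaves chainLeaves
  congr 1
  ext C
  simp only [Set.mem_setOf_eq]
  constructor
  · rintro ⟨h1, h2, h3⟩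
    exact ⟨h1, h2, (degree_eq_one_iff hconn hsub hR h1 h2).mp h3⟩
  · rintro ⟨h1, h2, h3⟩
    exact ⟨h1, h2, (degree_eq_one_iff hconn hsub hR h1 h2).mpr h3⟩

/-- For a subtree `T_δ` (with at least two clusters) of the layering
partition 𝒯, rooted consistently with 𝒯 at `R`, there is a family of `λ` paths of `G`
(`λ` = number of leaves of `T_δ` distinct from its root) such that every cluster of
`T_δ` is intersected by exactly one path, sharing exactly one vertex with it; in
particular the paths are pairwise vertex-disjoint and the total number of vertices on
all the paths equals the number of clusters of `T_δ`. -/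
theorem exists_path_family_for_subtree
    {V : Type} [Fintype V] (G : SimpleGraph V) (hconn : G.Connected)
    (s : V) (Tδ : Set (Cluster G s)) (hsub : IsSubtree G s Tδ)
    (hcard : 1 < Tδ.ncard)
    (R : Cluster G s) (hR : IsRootOf G s Tδ R) :
    ∃ (k : ℕ) (P : Fin k → Set V),
      k = numLeaves G s Tδ R ∧
      (∀ i : Fin k, ∃ (a b : V) (w : G.Walk a b), w.IsPath ∧
        P i = {x : V | x ∈ w.support}) ∧
      (∀ C ∈ Tδ, ∃! i : Fin k, ∃ v ∈ P i, toCluster G s v = C) ∧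
      (∀ C ∈ Tδ, ∀ i : Fin k, (∃ v ∈ P i, toCluster G s v = C) →
        (P i ∩ {v : V | toCluster G s v = C}).ncard = 1) ∧
      (∀ i j : Fin k, i ≠ j → Disjoint (P i) (P j)) ∧
      (∑ i : Fin k, (P i).ncard) = Tδ.ncard := by
  classical
  haveI : Finite (Cluster G s) := Quotient.finite _
  obtain ⟨k, c, fam, hk⟩ := chain_decomp (Tδ.ncard - 2) Tδ R (clusterLayer G s)
    (parentC G s) hR.1
    (fun C hC hne => ⟨parentC_mem_subtree hconn hsub hR hC hne,
      parentC_layer hconn (layer_pos_of_ne_root hconn hR hC hne),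
      root_layer_lt hconn hsub hR hC hne⟩)
    (by omega)
  have hpaths : ∀ i : Fin k, ∃ (a b : V) (w : G.Walk a b),
      w.support.map (toCluster G s) = c i ∧ w.support.head? = some a := by
    intro i
    obtain ⟨C, t, hct⟩ : ∃ C t, c i = C :: t := by
      cases hni : c i with
      | nil => exact absurd hni (fam.nonnil i)
      | cons C t => exact ⟨C, t, rfl⟩
    have hlayer : ∀ a ∈ (C :: t).dropLast, 1 ≤ clusterLayer G s a := by
      intro a ha
      rw [← hct] at ha
      have haR : a ≠ R := fam.dropR i a ha
      have haT : a ∈ Tδ := fam.memS i a (List.dropLast_subset _ ha)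
      exact layer_pos_of_ne_root hconn hR haT haR
    obtain ⟨b, w, hw⟩ := path_lift hconn t C (Quotient.out C) (toCluster_out G s C)
      (hct ▸ fam.chain i) hlayer
    exact ⟨Quotient.out C, b, w, hw.trans hct.symm, by
      rw [SimpleGraph.Walk.support_eq_cons, List.head?_cons]⟩
  choose av bv wv hwv hhead using hpaths
  have hsupnodup : ∀ i, ((wv i).support).Nodup := by
    intro i
    have := fam.nodup i
    rw [← hwv i] at this
    exact this.of_map _
  have hmem_iff : ∀ (i : Fin k) (C : Cluster G s),
      (∃ v ∈ (wv i).support, toCluster G s v = C) ↔ C ∈ c i := by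
    intro i C
    rw [← hwv i, List.mem_map]
  refine ⟨k, fun i => {x : V | x ∈ (wv i).support}, ?_, ?_, ?_, ?_, ?_, ?_⟩
  · rw [numLeaves_eq_chainLeaves hconn hsub hR]
    exact hk
  · intro i
    exact ⟨av i, bv i, wv i, (SimpleGraph.Walk.isPath_def _).mpr (hsupnodup i), rfl⟩
  · intro C hC
    obtain ⟨i₀, hi₀, huniq⟩ := fam.cover C hC
    refine ⟨i₀, (hmem_iff i₀ C).mpr hi₀, ?_⟩
    intro j hj
    exact huniq j ((hmem_iff j C).mp hj)
  · intro C hC i hi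
    obtain ⟨v₀, hv₀mem, hv₀C⟩ := hi
    have hset : {x : V | x ∈ (wv i).support} ∩ {v : V | toCluster G s v = C} = {v₀} := by
      ext y
      simp only [Set.mem_inter_iff, Set.mem_setOf_eq, Set.mem_singleton_iff]
      constructor
      · rintro ⟨hy1, hy2⟩
        have hnd : ((wv i).support.map (toCluster G s)).Nodup := by
          rw [hwv i]; exact fam.nodup i
        exact List.inj_on_of_nodup_map hnd hy1 hv₀mem (hy2.trans hv₀C.symm)
      · rintro rfl
        exact ⟨hv₀mem, hv₀C⟩
    rw [hset, Set.ncard_singleton]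
  · intro i j hij
    rw [Set.disjoint_left]
    intro v hvi hvj
    simp only [Set.mem_setOf_eq] at hvi hvj
    have hCi : toCluster G s v ∈ c i := (hmem_iff i _).mp ⟨v, hvi, rfl⟩
    have hCj : toCluster G s v ∈ c j := (hmem_iff j _).mp ⟨v, hvj, rfl⟩
    have hCT : toCluster G s v ∈ Tδ := fam.memS i _ hCi
    obtain ⟨i₀, -, huniq⟩ := fam.cover _ hCT
    exact hij ((huniq i hCi).trans (huniq j hCj).symm)
  · have hncard : ∀ i, ({x : V | x ∈ (wv i).support}).ncard = (c i).length := by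
      intro i
      have h1 : {x : V | x ∈ (wv i).support} = ↑((wv i).support.toFinset) := by
        ext y; simp
      rw [h1, Set.ncard_coe_finset, List.toFinset_card_of_nodup (hsupnodup i)]
      rw [← hwv i, List.length_map]
    calc (∑ i : Fin k, ({x : V | x ∈ (wv i).support}).ncard)
        = ∑ i : Fin k, (c i).length := Finset.sum_congr rfl (fun i _ => hncard i)
      _ = Tδ.ncard := fam.total
end
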